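/- arXiv:1509.07802 — 4 statements merged into one kernel-verified Lean document; each statement's English description precedes it below -/
import Mathlib

section
/- Let N₁,…,N_n be T-point processes defined on an ergodic invertible probability-preserving system (Ω,ℱ,ℙ,S), each with moments of all orders. Suppose there exist a real c > 0, an integer j with 2 ≤ j ≤ n, integers k₂,…,k_j, and a nonzero σ-finite (T×⋯×T)-invariant measure ν on X^{n−j} such that for all A₁,…,A_n ∈ 𝒜_f: E[N₁(A₁)⋯N_n(A_n)] ≥ c·μ(A₁ ∩ T^{−k₂}A₂ ∩ ⋯ ∩ T^{−k_j}A_j)·ν(A_{j+1}×⋯×A_n) (when j = n the factor ν(A_{j+1}×⋯×A_n) is read as 1). Then for every A ∈ 𝒜_f, with positive ℙ-probability there exists x ∈ A such that x ∈ N₁(ω) and T^{k_i} x ∈ N_i(ω) for every 2 ≤ i ≤ j. -/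
open MeasureTheory ProbabilityTheory Filter
open scoped ENNReal NNReal

namespace SuShi

/-- A simple counting measure: a sum of Dirac masses over a countable set of distinct points
which meets every bounded set in a finite set. -/
def IsSimpleCounting {X : Type*} [MetricSpace X] [MeasurableSpace X] (ξ : Measure X) : Prop :=
  ∃ D : Set X, D.Countable ∧ (∀ s : Set X, Bornology.IsBounded s → (D ∩ s).Finite) ∧
    ξ = Measure.count.restrict D

/-- A `T`-point process on the system `(Ω, P, S)`. -/
structure IsTPointProcess {X Ω : Type*} [MetricSpace X] [MeasurableSpace X] [MeasurableSpace Ω]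
    (μ : Measure X) (T : Equiv.Perm X) (P : Measure Ω) (S : Ω → Ω) (N : Ω → Measure X) :
    Prop where
  measurable : Measurable N
  simple : ∀ᵐ ω ∂P, IsSimpleCounting (N ω)
  null : ∀ A : Set X, MeasurableSet A → μ A = 0 → ∀ᵐ ω ∂P, N ω A = 0
  equivariant : ∀ᵐ ω ∂P, N (S ω) = (N ω).map ⇑T

/-- `N` has intensity `ρ`: `E[N(A)] = ρ(A)` for every measurable `A`. -/
def HasIntensity {X Ω : Type*} [MeasurableSpace X] [MeasurableSpace Ω]
    (P : Measure Ω) (N : Ω → Measure X) (ρ : Measure X) : Prop :=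
  ∀ A : Set X, MeasurableSet A → ∫⁻ ω, N ω A ∂P = ρ A

/-- `N` has moments of order `n`: `E[N(A)^n] < ∞` for every `A` with `0 < μ A < ∞`. -/
def HasMomentsOfOrder {X Ω : Type*} [MeasurableSpace X] [MeasurableSpace Ω]
    (P : Measure Ω) (N : Ω → Measure X) (μ : Measure X) (n : ℕ) : Prop :=
  ∀ A : Set X, MeasurableSet A → 0 < μ A → μ A < ⊤ → ∫⁻ ω, (N ω A) ^ n ∂P < ⊤

/-- `N` has moments of all orders. -/
def HasAllMoments {X Ω : Type*} [MeasurableSpace X] [MeasurableSpace Ω]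
    (P : Measure Ω) (N : Ω → Measure X) (μ : Measure X) : Prop :=
  ∀ n : ℕ, 1 ≤ n → HasMomentsOfOrder P N μ n

/-- `N` is a free `T`-point process. -/
def IsFree {X Ω : Type*} [MeasurableSpace X] [MeasurableSpace Ω]
    (T : Equiv.Perm X) (P : Measure Ω) (N : Ω → Measure X) : Prop :=
  ∀ k : ℤ, k ≠ 0 → ∀ᵐ ω ∂P, ∀ x : X, ¬(N ω {x} = 1 ∧ N ω {(T ^ k) x} = 1)

/-- `N₁` and `N₂` are dissociated `T`-point processes. -/
def Dissociated {X Ω : Type*} [MeasurableSpace X] [MeasurableSpace Ω]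
    (T : Equiv.Perm X) (P : Measure Ω) (N₁ N₂ : Ω → Measure X) : Prop :=
  ∀ k : ℤ, ∀ᵐ ω ∂P, ∀ x : X, ¬(N₁ ω {x} = 1 ∧ ((N₂ ω).map ⇑(T ^ k)) {x} = 1)

/-- `P(Z = k)` for a Poisson random variable `Z` of parameter `l`. -/
noncomputable def poissonProb (l : ℝ) (k : ℕ) : ℝ≥0∞ :=
  ENNReal.ofReal (Real.exp (-l) * l ^ k / (Nat.factorial k))

/-- `f` is Poisson distributed with parameter `l` under `P`. -/
def IsPoissonDistributed {Ω : Type*} [MeasurableSpace Ω]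
    (P : Measure Ω) (f : Ω → ℝ≥0∞) (l : ℝ) : Prop :=
  ∀ k : ℕ, P {ω | f ω = (k : ℝ≥0∞)} = poissonProb l k

/-- `N` is a Poisson point process of intensity `α • base`: for pairwise disjoint sets of
finite positive `base`-measure, the values of `N` are independent Poisson random variables
with parameters `α * base (A i)`. -/
def IsPoissonPP {Z Ω : Type*} [MeasurableSpace Z] [MeasurableSpace Ω]
    (P : Measure Ω) (N : Ω → Measure Z) (base : Measure Z) (α : ℝ≥0) : Prop :=
  ∀ (k : ℕ) (A : Fin k → Set Z), (∀ i, MeasurableSet (A i)) →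
    (∀ i, 0 < base (A i)) → (∀ i, base (A i) < ⊤) →
    (Pairwise fun i j => Disjoint (A i) (A j)) →
    iIndepFun (fun i ω => N ω (A i)) P ∧
    ∀ i, IsPoissonDistributed P (fun ω => N ω (A i)) (α * (base (A i)).toReal)

/-- Property (P1): all finite direct products of the base system are ergodic. -/
def P1 {X : Type*} [MeasurableSpace X] (μ : Measure X) [SigmaFinite μ] (T : Equiv.Perm X) :
    Prop :=
  ∀ n : ℕ, 1 ≤ n →
    Ergodic (fun x : Fin n → X => fun i => T (x i)) (Measure.pi fun _ : Fin n => μ)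

/-- The measure `m_π^κ` on `X^n`, where the partition `π` of `Fin n` is encoded by the fibers of
a surjection `cl : Fin n → Fin m`: the image of `μ^{⊗ m}` by `(y_P)_P ↦ (T^{κ i} y_{cl i})_i`. -/
noncomputable def mPiKappa {X : Type*} [MeasurableSpace X] (μ : Measure X) [SigmaFinite μ]
    (T : Equiv.Perm X) {n m : ℕ} (cl : Fin n → Fin m) (κ : Fin n → ℤ) :
    Measure (Fin n → X) :=
  (Measure.pi fun _ : Fin m => μ).map fun y i => (T ^ κ i) (y (cl i))

/-- Property (P2): every `T^{×n}`-invariant measure on `X^n` which is finite on bounded sets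
and whose marginals are absolutely continuous w.r.t. `μ` is a countable sum of measures
`c • m_π^κ` with `c > 0` and `κ` `π`-compatible. -/
def P2 {X : Type*} [MetricSpace X] [MeasurableSpace X] (μ : Measure X) [SigmaFinite μ]
    (T : Equiv.Perm X) : Prop :=
  ∀ n : ℕ, 1 ≤ n → ∀ σ : Measure (Fin n → X),
    (∀ s : Set (Fin n → X), Bornology.IsBounded s → σ s < ⊤) →
    σ.map (fun x i => T (x i)) = σ →
    (∀ i : Fin n, σ.map (fun x => x i) ≪ μ) →
    ∃ (ι : Type) (_ : Countable ι) (c : ι → ℝ≥0) (m : ι → ℕ)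
      (cl : (j : ι) → Fin n → Fin (m j)) (κ : (j : ι) → Fin n → ℤ),
      (∀ j, 0 < c j) ∧ (∀ j, Function.Surjective (cl j)) ∧
      (∀ j i, (∀ i', cl j i' = cl j i → i ≤ i') → κ j i = 0) ∧
      σ = Measure.sum fun j => c j • mPiKappa μ T (cl j) (κ j)

/-- `ρ` is a joining of the two systems `(ν₁, S₁)` and `(ν₂, S₂)`. -/
def IsJoining {Y₁ Y₂ : Type*} [MeasurableSpace Y₁] [MeasurableSpace Y₂]
    (ν₁ : Measure Y₁) (S₁ : Y₁ → Y₁) (ν₂ : Measure Y₂) (S₂ : Y₂ → Y₂)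
    (ρ : Measure (Y₁ × Y₂)) : Prop :=
  IsProbabilityMeasure ρ ∧ ρ.map (Prod.map S₁ S₂) = ρ ∧
    ρ.map Prod.fst = ν₁ ∧ ρ.map Prod.snd = ν₂

/-- The two systems `(ν₁, S₁)` and `(ν₂, S₂)` are disjoint: their only joining is the
product measure. -/
def SystemsDisjoint {Y₁ Y₂ : Type*} [MeasurableSpace Y₁] [MeasurableSpace Y₂]
    (ν₁ : Measure Y₁) (S₁ : Y₁ → Y₁) (ν₂ : Measure Y₂) (S₂ : Y₂ → Y₂) : Prop :=
  ∀ ρ : Measure (Y₁ × Y₂), IsJoining ν₁ S₁ ν₂ S₂ ρ → ρ = ν₁.prod ν₂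

/-- `(X, μ, T)` admits a measurable law of large numbers. -/
def MeasurableLLN {X : Type*} [MeasurableSpace X] (μ : Measure X) (T : X → X) : Prop :=
  ∃ L : (ℕ → ℝ≥0∞) → ℝ≥0∞, Measurable L ∧
    ∀ B : Set X, MeasurableSet B →
      ∀ᵐ x ∂μ, L (fun k => B.indicator (1 : X → ℝ≥0∞) (T^[k] x)) = μ B


/-- Auxiliary family of sets used in the proof of `stmt3`. -/
noncomputable def auxC {X : Type*} (T : Equiv.Perm X) {n : ℕ} (j : ℕ)
    (k : Fin n → ℤ) (A E : Set X) (B : { i : Fin n // j ≤ (i : ℕ) } → Set X) (i : Fin n) :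
    Set X :=
  if h : (i : ℕ) < j then ⇑(T ^ k i) '' (A ∩ E) else B ⟨i, le_of_not_gt h⟩

lemma auxC_lt {X : Type*} (T : Equiv.Perm X) {n : ℕ} (j : ℕ) (k : Fin n → ℤ)
    (A E : Set X) (B : { i : Fin n // j ≤ (i : ℕ) } → Set X) {i : Fin n}
    (h : (i : ℕ) < j) : auxC T j k A E B i = ⇑(T ^ k i) '' (A ∩ E) := dif_pos h

lemma auxC_ge {X : Type*} (T : Equiv.Perm X) {n : ℕ} (j : ℕ) (k : Fin n → ℤ)
    (A E : Set X) (B : { i : Fin n // j ≤ (i : ℕ) } → Set X) {i : Fin n}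
    (h : ¬ (i : ℕ) < j) : auxC T j k A E B i = B ⟨i, le_of_not_gt h⟩ := dif_neg h

lemma tsum_prod_le_prod_tsum {ι : Type*} {s : Finset ι} (hs : s.Nonempty) (a : ι → ℕ → ℝ≥0∞) :
    ∑' m, ∏ i ∈ s, a i m ≤ ∏ i ∈ s, ∑' m, a i m := by
  classical
  induction s using Finset.cons_induction with
  | empty => exact absurd hs (by simp)
  | cons i t hi ih =>
    rcases t.eq_empty_or_nonempty with rfl | ht
    · simp
    · simp only [Finset.prod_cons]
      calc ∑' m, a i m * ∏ x ∈ t, a x m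
          ≤ ∑' m, a i m * ∏ x ∈ t, ∑' m', a x m' := by
            refine ENNReal.tsum_le_tsum fun m => mul_le_mul_right ?_ _
            exact le_trans (ENNReal.le_tsum m) (ih ht)
        _ = (∑' m, a i m) * ∏ x ∈ t, ∑' m', a x m' := ENNReal.tsum_mul_right

lemma prod_le_sum_pow_card {ι : Type*} [Fintype ι] [Nonempty ι] (f : ι → ℝ≥0∞) :
    ∏ i, f i ≤ ∑ i, f i ^ (Fintype.card ι) := by
  obtain ⟨i₀, -, h⟩ := Finset.exists_mem_eq_sup Finset.univ Finset.univ_nonempty f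
  calc ∏ i, f i ≤ (Finset.univ.sup f) ^ Finset.univ.card :=
        Finset.prod_le_pow_card _ _ _ (fun x _ => Finset.le_sup (Finset.mem_univ x))
    _ = f i₀ ^ Fintype.card ι := by rw [← h, Finset.card_univ]
    _ ≤ _ := Finset.single_le_sum (f := fun i => f i ^ Fintype.card ι) (fun _ _ => zero_le ..) (Finset.mem_univ i₀)

lemma exists_min_dist {X : Type*} [MetricSpace X] {S : Set X} (hS : S.Finite) :
    ∃ δ : ℝ, 0 < δ ∧ ∀ x ∈ S, ∀ y ∈ S, x ≠ y → δ ≤ dist x y := by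
  have hfin : ((fun p : X × X => dist p.1 p.2) '' ((S ×ˢ S) ∩ {p | p.1 ≠ p.2})).Finite :=
    (((hS.prod hS).inter_of_left _).image _)
  by_cases hne : ((fun p : X × X => dist p.1 p.2) '' ((S ×ˢ S) ∩ {p | p.1 ≠ p.2})).Nonempty
  · refine ⟨sInf ((fun p : X × X => dist p.1 p.2) '' ((S ×ˢ S) ∩ {p | p.1 ≠ p.2})), ?_, ?_⟩
    · obtain ⟨p, ⟨⟨hp1, hp2⟩, hpne⟩, hpd⟩ := hne.csInf_mem hfin
      rw [← hpd]
      exact dist_pos.mpr hpne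
    · intro x hx y hy hxy
      exact csInf_le hfin.bddBelow ⟨(x, y), ⟨⟨hx, hy⟩, hxy⟩, rfl⟩
  · exact ⟨1, one_pos, fun x hx y hy hxy =>
      absurd ⟨dist x y, ⟨(x, y), ⟨⟨hx, hy⟩, hxy⟩, rfl⟩⟩ hne⟩

/-- if the joint moment measure of `N₁,…,N_n` dominates a "partly diagonal"
measure, then with positive probability the first `j` processes have points on a common
`T`-orbit, located in any prescribed set `A` of finite positive measure. -/
theorem stmt3 {X : Type*} [MetricSpace X] [CompleteSpace X] [TopologicalSpace.SeparableSpace X]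
    [MeasurableSpace X] [BorelSpace X]
    (μ : Measure X) (hμbdd : ∀ s : Set X, Bornology.IsBounded s → μ s < ⊤)
    (hμinf : μ Set.univ = ⊤)
    (T : Equiv.Perm X) (hT : Measurable ⇑T) (hTinv : Measurable ⇑T.symm)
    (hTpres : MeasurePreserving ⇑T μ μ)
    (hTcons : Conservative ⇑T μ) (hTerg : Ergodic ⇑T μ)
    {Ω : Type*} [MeasurableSpace Ω] (P : Measure Ω) [IsProbabilityMeasure P]
    (S : Equiv.Perm Ω) (hS : Measurable ⇑S) (hSinv : Measurable ⇑S.symm)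
    (hSerg : Ergodic ⇑S P)
    (n j : ℕ) (hj2 : 2 ≤ j) (hjn : j ≤ n)
    (N : Fin n → Ω → Measure X)
    (hN : ∀ i, IsTPointProcess μ T P ⇑S (N i))
    (hmom : ∀ i, HasAllMoments P (N i) μ)
    (c : ℝ) (hc : 0 < c)
    (k : Fin n → ℤ) (hk0 : ∀ i : Fin n, (i : ℕ) = 0 → k i = 0)
    (ν : Measure ({ i : Fin n // j ≤ (i : ℕ) } → X)) [SigmaFinite ν] (hν : ν ≠ 0)
    (hνinv : ν.map (fun y r => T (y r)) = ν)
    (hlower : ∀ A : Fin n → Set X, (∀ i, MeasurableSet (A i)) →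
      (∀ i, 0 < μ (A i)) → (∀ i, μ (A i) < ⊤) →
      ENNReal.ofReal c * μ (⋂ i : { i : Fin n // (i : ℕ) < j }, ⇑(T ^ k i.1) ⁻¹' A i.1) *
          ν {y | ∀ r, y r ∈ A r.1} ≤
        ∫⁻ ω, ∏ i, N i ω (A i) ∂P) :
    ∀ A : Set X, MeasurableSet A → 0 < μ A → μ A < ⊤ →
      0 < P {ω | ∃ x ∈ A, ∀ i : Fin n, (i : ℕ) < j → N i ω {(T ^ k i) x} = 1} := by
  classical
  intro A hA hA0 hAtop
  by_contra hcon
  rw [not_lt, le_zero_iff] at hcon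
  -- X is nonempty
  have hXne : Nonempty X := by
    rcases isEmpty_or_nonempty X with h | h
    · exfalso; rw [Set.univ_eq_empty_iff.mpr h] at hμinf; simp at hμinf
    · exact h
  haveI := hXne
  obtain ⟨x₀⟩ := id hXne
  have hn0 : 0 < n := by omega
  have h0j : ((⟨0, hn0⟩ : Fin n) : ℕ) < j := by simpa using (by omega : 0 < j)
  haveI : Nonempty { i : Fin n // (i : ℕ) < j } := ⟨⟨⟨0, hn0⟩, h0j⟩⟩
  -- powers of T preserve μ
  have hTk : ∀ m : ℤ, MeasurePreserving ⇑(T ^ m) μ μ := by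
    intro m
    have hsymm : MeasurePreserving ⇑T.symm μ μ :=
      (MeasurePreserving.symm (⟨T, hT, hTinv⟩ : X ≃ᵐ X) hTpres)
    induction m using Int.induction_on with
    | zero => simpa [zpow_zero] using MeasurePreserving.id μ
    | succ i ih =>
        have h : ⇑(T ^ ((i : ℤ) + 1)) = ⇑(T ^ (i : ℤ)) ∘ ⇑T := by
          funext x; rw [zpow_add_one]; rfl
        rw [h]; exact ih.comp hTpres
    | pred i ih =>
        have h : ⇑(T ^ (-(i : ℤ) - 1)) = ⇑(T ^ (-(i : ℤ))) ∘ ⇑T.symm := by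
          funext x; rw [zpow_sub_one]; rfl
        rw [h]; exact ih.comp hsymm
  -- images under powers of T
  have hTkimg : ∀ (m : ℤ) {s : Set X}, MeasurableSet s →
      MeasurableSet (⇑(T ^ m) '' s) ∧ μ (⇑(T ^ m) '' s) = μ s := by
    intro m s hs
    have himg : ⇑(T ^ m) '' s = ⇑(T ^ (-m)) ⁻¹' s := by
      rw [Equiv.image_eq_preimage_symm]
      have he : Equiv.symm (T ^ m) = T ^ (-m) := by rw [zpow_neg]; rfl
      rw [he]
    constructor
    · rw [himg]; exact (hTk (-m)).measurable hs
    · rw [himg, (hTk (-m)).measure_preimage hs.nullMeasurableSet]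
  -- a set of positive finite measure
  obtain ⟨C, hCmeas, hC0, hCtop⟩ : ∃ C : Set X, MeasurableSet C ∧ 0 < μ C ∧ μ C < ⊤ := by
    by_contra h
    push_neg at h
    have hball : ∀ m : ℕ, μ (Metric.closedBall x₀ m) = 0 := by
      intro m
      by_contra hm
      exact absurd (hμbdd _ Metric.isBounded_closedBall)
        (not_lt.mpr (h _ measurableSet_closedBall (pos_iff_ne_zero.mpr hm)))
    have huniv : μ Set.univ = 0 := by
      have hcover : (Set.univ : Set X) ⊆ ⋃ m : ℕ, Metric.closedBall x₀ m := by
        intro x _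
        obtain ⟨m, hm⟩ := exists_nat_ge (dist x x₀)
        exact Set.mem_iUnion.mpr ⟨m, Metric.mem_closedBall.mpr hm⟩
      exact le_antisymm ((measure_mono hcover).trans (measure_iUnion_null hball).le) (zero_le ..)
    rw [huniv] at hμinf; simp at hμinf
  -- choice of the sets B r
  obtain ⟨B, hBmeas, hB0, hBtop, hνB⟩ : ∃ B : { i : Fin n // j ≤ (i : ℕ) } → Set X,
      (∀ r, MeasurableSet (B r)) ∧ (∀ r, 0 < μ (B r)) ∧ (∀ r, μ (B r) < ⊤) ∧
      0 < ν {y | ∀ r, y r ∈ B r} := by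
    obtain ⟨f, hf⟩ : ∃ f : { i : Fin n // j ≤ (i : ℕ) } → ℕ,
        ν {y | ∀ r, y r ∈ Metric.closedBall x₀ (f r)} ≠ 0 := by
      by_contra hf
      push_neg at hf
      have hcov : (Set.univ : Set ({ i : Fin n // j ≤ (i : ℕ) } → X)) ⊆
          ⋃ f : { i : Fin n // j ≤ (i : ℕ) } → ℕ,
            {y | ∀ r, y r ∈ Metric.closedBall x₀ (f r)} := by
        intro y _
        exact Set.mem_iUnion.mpr ⟨fun r => ⌈dist (y r) x₀⌉₊,
          fun r => Metric.mem_closedBall.mpr (Nat.le_ceil _)⟩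
      have : ν Set.univ = 0 :=
        le_antisymm ((measure_mono hcov).trans (measure_iUnion_null hf).le) (zero_le ..)
      exact hν (Measure.measure_univ_eq_zero.mp this)
    refine ⟨fun r => Metric.closedBall x₀ (f r) ∪ C,
      fun r => measurableSet_closedBall.union hCmeas,
      fun r => lt_of_lt_of_le hC0 (measure_mono Set.subset_union_right),
      fun r => lt_of_le_of_lt (measure_union_le _ _)
        (ENNReal.add_lt_top.mpr ⟨hμbdd _ Metric.isBounded_closedBall, hCtop⟩),
      lt_of_lt_of_le (pos_iff_ne_zero.mpr hf)
        (measure_mono fun y hy r => Set.mem_union_left _ (hy r))⟩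
  -- the fine partitions
  obtain ⟨u, hu⟩ := TopologicalSpace.exists_dense_seq X
  obtain ⟨D, hDmeas, hDdisj, hDunion, hDdiam⟩ :
      ∃ D : ℕ → ℕ → Set X, (∀ q m, MeasurableSet (D q m)) ∧
        (∀ q, Pairwise (Function.onFun Disjoint (D q))) ∧ (∀ q, (⋃ m, D q m) = Set.univ) ∧
        (∀ q m, ∀ x ∈ D q m, ∀ y ∈ D q m, dist x y ≤ 2 / ((q : ℝ) + 1)) := by
    refine ⟨fun q => disjointed (fun l => Metric.ball (u l) (1 / ((q : ℝ) + 1))),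
      fun q m => MeasurableSet.disjointed (fun l => measurableSet_ball) m,
      fun q => disjoint_disjointed _, fun q => ?_, fun q m x hx y hy => ?_⟩
    · rw [iUnion_disjointed]
      refine Set.eq_univ_iff_forall.mpr fun x => ?_
      obtain ⟨m, hm⟩ := hu.exists_dist_lt x (by positivity : (0:ℝ) < 1 / ((q : ℝ) + 1))
      exact Set.mem_iUnion.mpr ⟨m, Metric.mem_ball.mpr hm⟩
    · have hx' := disjointed_subset _ m hx
      have hy' := disjointed_subset _ m hy
      rw [Metric.mem_ball] at hx' hy'
      calc dist x y ≤ dist x (u m) + dist y (u m) := dist_triangle_right _ _ _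
        _ ≤ 2 / ((q : ℝ) + 1) := by
            rw [show (2:ℝ) / ((q:ℝ)+1) = 1/((q:ℝ)+1) + 1/((q:ℝ)+1) by ring]
            exact add_le_add hx'.le hy'.le
  -- measurability of all the auxiliary sets
  have hmeasC : ∀ q m i, MeasurableSet (auxC T j k A (D q m) B i) := by
    intro q m i
    by_cases h : (i : ℕ) < j
    · rw [auxC_lt T j k A _ B h]; exact (hTkimg (k i) (hA.inter (hDmeas q m))).1
    · rw [auxC_ge T j k A _ B h]; exact hBmeas _
  have hCfulmeas : ∀ i, MeasurableSet (auxC T j k A Set.univ B i) := by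
    intro i
    by_cases h : (i : ℕ) < j
    · rw [auxC_lt T j k A _ B h]; exact (hTkimg (k i) (hA.inter MeasurableSet.univ)).1
    · rw [auxC_ge T j k A _ B h]; exact hBmeas _
  have hCful0 : ∀ i, 0 < μ (auxC T j k A Set.univ B i) := by
    intro i
    by_cases h : (i : ℕ) < j
    · rw [auxC_lt T j k A _ B h, (hTkimg (k i) (hA.inter MeasurableSet.univ)).2,
        Set.inter_univ]
      exact hA0
    · rw [auxC_ge T j k A _ B h]; exact hB0 _
  have hCfultop : ∀ i, μ (auxC T j k A Set.univ B i) < ⊤ := by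
    intro i
    by_cases h : (i : ℕ) < j
    · rw [auxC_lt T j k A _ B h, (hTkimg (k i) (hA.inter MeasurableSet.univ)).2,
        Set.inter_univ]
      exact hAtop
    · rw [auxC_ge T j k A _ B h]; exact hBtop _
  have hNmeas : ∀ (i : Fin n) (s : Set X), MeasurableSet s → Measurable (fun ω => N i ω s) :=
    fun i s hs => (Measure.measurable_coe hs).comp (hN i).measurable
  have hmom1 : ∀ i, ∫⁻ ω, N i ω (auxC T j k A Set.univ B i) ∂P < ⊤ := by
    intro i
    have := hmom i 1 le_rfl _ (hCfulmeas i) (hCful0 i) (hCfultop i)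
    simpa using this
  -- the almost-everywhere good set
  have hae : ∀ᵐ ω ∂P, (∀ i, IsSimpleCounting (N i ω)) ∧
      (∀ i, N i ω (auxC T j k A Set.univ B i) < ⊤) ∧
      ¬ ∃ x ∈ A, ∀ i : Fin n, (i : ℕ) < j → N i ω {(T ^ k i) x} = 1 := by
    have h1 : ∀ᵐ ω ∂P, ∀ i, IsSimpleCounting (N i ω) := ae_all_iff.mpr fun i => (hN i).simple
    have h2 : ∀ᵐ ω ∂P, ∀ i, N i ω (auxC T j k A Set.univ B i) < ⊤ :=
      ae_all_iff.mpr fun i => ae_lt_top (hNmeas i _ (hCfulmeas i)) (hmom1 i).ne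
    have h3 : ∀ᵐ ω ∂P, ¬ ∃ x ∈ A, ∀ i : Fin n, (i : ℕ) < j → N i ω {(T ^ k i) x} = 1 := by
      rw [ae_iff]
      simpa only [not_not] using hcon
    exact h1.and (h2.and h3)
  -- decomposition of μ A along the partition
  have hμAsum : ∀ q : ℕ, μ A = ∑' m, μ (A ∩ D q m) := by
    intro q
    have hAeq : A = ⋃ m, A ∩ D q m := by
      rw [← Set.inter_iUnion, hDunion q, Set.inter_univ]
    conv_lhs => rw [hAeq]
    exact measure_iUnion
      (fun a b hab => Disjoint.mono Set.inter_subset_right Set.inter_subset_right (hDdisj q hab))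
      (fun m => hA.inter (hDmeas q m))
  -- the lower bound, uniformly in q
  have hlow : ∀ q : ℕ, ENNReal.ofReal c * μ A * ν {y | ∀ r, y r ∈ B r} ≤
      ∫⁻ ω, ∑' m, ∏ i, N i ω (auxC T j k A (D q m) B i) ∂P := by
    intro q
    have hterm : ∀ m : ℕ, ENNReal.ofReal c * μ (A ∩ D q m) * ν {y | ∀ r, y r ∈ B r} ≤
        ∫⁻ ω, ∏ i, N i ω (auxC T j k A (D q m) B i) ∂P := by
      intro m
      rcases eq_or_ne (μ (A ∩ D q m)) 0 with h0 | h0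
      · simp [h0]
      · have hpos : ∀ i, 0 < μ (auxC T j k A (D q m) B i) := by
          intro i
          by_cases h : (i : ℕ) < j
          · rw [auxC_lt T j k A _ B h, (hTkimg (k i) (hA.inter (hDmeas q m))).2]
            exact pos_iff_ne_zero.mpr h0
          · rw [auxC_ge T j k A _ B h]; exact hB0 _
        have htop : ∀ i, μ (auxC T j k A (D q m) B i) < ⊤ := by
          intro i
          by_cases h : (i : ℕ) < j
          · rw [auxC_lt T j k A _ B h, (hTkimg (k i) (hA.inter (hDmeas q m))).2]
            exact lt_of_le_of_lt (measure_mono Set.inter_subset_left) hAtop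
          · rw [auxC_ge T j k A _ B h]; exact hBtop _
        have hl := hlower _ (hmeasC q m) hpos htop
        refine le_trans (le_of_eq ?_) hl
        have hiInter : (⋂ i : { i : Fin n // (i : ℕ) < j },
            ⇑(T ^ k i.1) ⁻¹' auxC T j k A (D q m) B i.1) = A ∩ D q m := by
          have hc' : ∀ i : { i : Fin n // (i : ℕ) < j },
              ⇑(T ^ k i.1) ⁻¹' auxC T j k A (D q m) B i.1 = A ∩ D q m := by
            intro i
            rw [auxC_lt T j k A _ B i.2, Equiv.preimage_image]
          rw [Set.iInter_congr hc', Set.iInter_const]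
        have hνset : {y : { i : Fin n // j ≤ (i : ℕ) } → X | ∀ r, y r ∈ B r} =
            {y | ∀ r, y r ∈ auxC T j k A (D q m) B r.1} := by
          ext y
          simp only [Set.mem_setOf_eq]
          refine forall_congr' fun r => ?_
          obtain ⟨i, hi⟩ := r
          rw [auxC_ge T j k A _ B (not_lt.mpr hi)]
        rw [hiInter, hνset]
    calc ENNReal.ofReal c * μ A * ν {y | ∀ r, y r ∈ B r}
        = ∑' m, ENNReal.ofReal c * μ (A ∩ D q m) * ν {y | ∀ r, y r ∈ B r} := by
          rw [ENNReal.tsum_mul_right, ENNReal.tsum_mul_left, ← hμAsum q]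
      _ ≤ ∑' m, ∫⁻ ω, ∏ i, N i ω (auxC T j k A (D q m) B i) ∂P := ENNReal.tsum_le_tsum hterm
      _ = ∫⁻ ω, ∑' m, ∏ i, N i ω (auxC T j k A (D q m) B i) ∂P :=
          (lintegral_tsum fun m => (Finset.measurable_prod _
            fun i _ => hNmeas i _ (hmeasC q m i)).aemeasurable).symm
  -- domination
  have hfS : (Finset.univ.filter (fun i : Fin n => (i : ℕ) < j)).Nonempty :=
    ⟨⟨0, hn0⟩, Finset.mem_filter.mpr ⟨Finset.mem_univ _, h0j⟩⟩
  have hFle : ∀ (q : ℕ) (ω : Ω), (∑' m, ∏ i, N i ω (auxC T j k A (D q m) B i)) ≤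
      ∏ i, N i ω (auxC T j k A Set.univ B i) := by
    intro q ω
    calc ∑' m, ∏ i, N i ω (auxC T j k A (D q m) B i)
        = ∑' m, (∏ i ∈ Finset.univ.filter (fun i : Fin n => (i : ℕ) < j),
              N i ω (⇑(T ^ k i) '' (A ∩ D q m))) *
            (∏ i ∈ Finset.univ.filter (fun i : Fin n => ¬ (i : ℕ) < j),
              N i ω (auxC T j k A Set.univ B i)) := by
          refine tsum_congr fun m => ?_
          rw [← Finset.prod_filter_mul_prod_filter_not Finset.univ (fun i : Fin n => (i : ℕ) < j)]
          congr 1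
          · exact Finset.prod_congr rfl fun i hi => by
              rw [auxC_lt T j k A _ B (Finset.mem_filter.mp hi).2]
          · refine Finset.prod_congr rfl fun i hi => ?_
            rw [auxC_ge T j k A _ B (Finset.mem_filter.mp hi).2,
              auxC_ge T j k A _ B (Finset.mem_filter.mp hi).2]
      _ = (∑' m, ∏ i ∈ Finset.univ.filter (fun i : Fin n => (i : ℕ) < j),
              N i ω (⇑(T ^ k i) '' (A ∩ D q m))) *
            (∏ i ∈ Finset.univ.filter (fun i : Fin n => ¬ (i : ℕ) < j),
              N i ω (auxC T j k A Set.univ B i)) := ENNReal.tsum_mul_right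
      _ ≤ (∏ i ∈ Finset.univ.filter (fun i : Fin n => (i : ℕ) < j),
              ∑' m, N i ω (⇑(T ^ k i) '' (A ∩ D q m))) *
            (∏ i ∈ Finset.univ.filter (fun i : Fin n => ¬ (i : ℕ) < j),
              N i ω (auxC T j k A Set.univ B i)) :=
          mul_le_mul_left (tsum_prod_le_prod_tsum hfS _) _
      _ = (∏ i ∈ Finset.univ.filter (fun i : Fin n => (i : ℕ) < j),
              N i ω (⇑(T ^ k i) '' A)) *
            (∏ i ∈ Finset.univ.filter (fun i : Fin n => ¬ (i : ℕ) < j),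
              N i ω (auxC T j k A Set.univ B i)) := by
          congr 1
          refine Finset.prod_congr rfl fun i _ => ?_
          have hdisj : Pairwise (Function.onFun Disjoint fun m => ⇑(T ^ k i) '' (A ∩ D q m)) :=
            fun a b hab => (Set.disjoint_image_iff (T ^ k i).injective).mpr
              (Disjoint.mono Set.inter_subset_right Set.inter_subset_right (hDdisj q hab))
          have hmeas' : ∀ m : ℕ, MeasurableSet (⇑(T ^ k i) '' (A ∩ D q m)) :=
            fun m => (hTkimg (k i) (hA.inter (hDmeas q m))).1
          have h1 : (⋃ m, ⇑(T ^ k i) '' (A ∩ D q m)) = ⇑(T ^ k i) '' A := by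
            rw [← Set.image_iUnion, ← Set.inter_iUnion, hDunion q, Set.inter_univ]
          rw [← measure_iUnion hdisj hmeas', h1]
      _ = ∏ i, N i ω (auxC T j k A Set.univ B i) := by
          rw [← Finset.prod_filter_mul_prod_filter_not Finset.univ (fun i : Fin n => (i : ℕ) < j)]
          congr 1
          exact Finset.prod_congr rfl fun i hi => by
            rw [auxC_lt T j k A _ B (Finset.mem_filter.mp hi).2, Set.inter_univ]
  -- integrability of the dominating function
  haveI : Nonempty (Fin n) := ⟨⟨0, hn0⟩⟩
  have hbtop : ∫⁻ ω, ∏ i, N i ω (auxC T j k A Set.univ B i) ∂P ≠ ⊤ := by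
    have hle : ∀ ω, ∏ i, N i ω (auxC T j k A Set.univ B i) ≤
        ∑ i, (N i ω (auxC T j k A Set.univ B i)) ^ n := by
      intro ω
      simpa [Fintype.card_fin] using
        prod_le_sum_pow_card (fun i => N i ω (auxC T j k A Set.univ B i))
    have hint : ∫⁻ ω, ∏ i, N i ω (auxC T j k A Set.univ B i) ∂P ≤
        ∑ i, ∫⁻ ω, (N i ω (auxC T j k A Set.univ B i)) ^ n ∂P :=
      le_trans (lintegral_mono hle) (le_of_eq (lintegral_finset_sum _
        fun i _ => (hNmeas i _ (hCfulmeas i)).pow_const n))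
    exact (lt_of_le_of_lt hint (ENNReal.sum_lt_top.mpr
      fun i _ => hmom i n (by omega) _ (hCfulmeas i) (hCful0 i) (hCfultop i))).ne
  -- pointwise convergence to 0
  have htend0 : ∀ᵐ ω ∂P, Tendsto
      (fun q => ∑' m, ∏ i, N i ω (auxC T j k A (D q m) B i)) atTop (nhds 0) := by
    filter_upwards [hae] with ω hω
    obtain ⟨hsimple, hfinc, hnopt⟩ := hω
    choose Dd hButNot1 hButNot2 hDdeq using hsimple
    have heval : ∀ (i : Fin n) (s : Set X), MeasurableSet s →
        N i ω s = Measure.count (s ∩ Dd i) := by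
      intro i s hs
      rw [hDdeq i, Measure.restrict_apply hs]
    have hSfin : ∀ i : Fin n, (i : ℕ) < j → (A ∩ ⇑(T ^ k i) ⁻¹' (Dd i)).Finite := by
      intro i hi
      have hfin1 : ((⇑(T ^ k i) '' A) ∩ Dd i).Finite := by
        have hlt := hfinc i
        rw [auxC_lt T j k A _ B hi, Set.inter_univ] at hlt
        rw [heval i _ (hTkimg (k i) hA).1] at hlt
        exact Measure.count_apply_lt_top.mp hlt
      have hset : A ∩ ⇑(T ^ k i) ⁻¹' (Dd i) = ⇑(T ^ k i) ⁻¹' ((⇑(T ^ k i) '' A) ∩ Dd i) := by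
        rw [Set.preimage_inter, Equiv.preimage_image]
      rw [hset]
      exact hfin1.preimage fun x _ y _ h => (T ^ k i).injective h
    have hSallfin : (⋃ i : { i : Fin n // (i : ℕ) < j },
        (A ∩ ⇑(T ^ k i.1) ⁻¹' (Dd i.1))).Finite :=
      Set.finite_iUnion fun i => hSfin i.1 i.2
    obtain ⟨δ, hδ0, hδ⟩ := exists_min_dist hSallfin
    obtain ⟨q₀, hq₀⟩ : ∃ q₀ : ℕ, 2 / ((q₀ : ℝ) + 1) < δ := by
      obtain ⟨q₀, h⟩ := exists_nat_gt (2 / δ)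
      refine ⟨q₀, ?_⟩
      rw [div_lt_iff₀ (by positivity)]
      have h2 : 2 / δ < (q₀ : ℝ) + 1 := h.trans (lt_add_one _)
      calc (2 : ℝ) = (2 / δ) * δ := by field_simp
        _ < ((q₀ : ℝ) + 1) * δ := mul_lt_mul_of_pos_right h2 hδ0
        _ = δ * ((q₀ : ℝ) + 1) := mul_comm _ _
    refine tendsto_atTop_of_eventually_const (i₀ := q₀) fun q hq => ?_
    have hzero : ∀ m, ∏ i ∈ Finset.univ.filter (fun i : Fin n => (i : ℕ) < j),
        N i ω (⇑(T ^ k i) '' (A ∩ D q m)) = 0 := by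
      intro m
      by_contra hne0
      have hne := Finset.prod_ne_zero_iff.mp hne0
      have hxi : ∀ i : Fin n, (i : ℕ) < j → ∃ x, x ∈ A ∩ D q m ∧ (T ^ k i) x ∈ Dd i := by
        intro i hi
        have hni := hne i (Finset.mem_filter.mpr ⟨Finset.mem_univ _, hi⟩)
        rw [heval i _ (hTkimg (k i) (hA.inter (hDmeas q m))).1] at hni
        have hnonempty : ((⇑(T ^ k i) '' (A ∩ D q m)) ∩ Dd i).Nonempty := by
          rw [Set.nonempty_iff_ne_empty]
          intro h
          exact hni (by rw [h]; exact measure_empty)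
        obtain ⟨y, hy1, hy2⟩ := hnonempty
        obtain ⟨x, hx, rfl⟩ := hy1
        exact ⟨x, hx, hy2⟩
      obtain ⟨x₁, hx₁, hx₁D⟩ := hxi ⟨0, hn0⟩ h0j
      have hnall : ¬ ∀ i : Fin n, (i : ℕ) < j → N i ω {(T ^ k i) x₁} = 1 :=
        fun hall => hnopt ⟨x₁, hx₁.1, hall⟩
      push_neg at hnall
      obtain ⟨i₂, hi₂, hNne⟩ := hnall
      have hx₁not : (T ^ k i₂) x₁ ∉ Dd i₂ := by
        intro hmem
        apply hNne
        rw [heval i₂ _ (measurableSet_singleton _),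
          Set.inter_eq_self_of_subset_left (Set.singleton_subset_iff.mpr hmem),
          Measure.count_singleton]
      obtain ⟨x₂, hx₂, hx₂D⟩ := hxi i₂ hi₂
      have hne12 : x₂ ≠ x₁ := fun h => hx₁not (h ▸ hx₂D)
      have hx₁S : x₁ ∈ ⋃ i : { i : Fin n // (i : ℕ) < j }, (A ∩ ⇑(T ^ k i.1) ⁻¹' (Dd i.1)) :=
        Set.mem_iUnion.mpr ⟨⟨⟨0, hn0⟩, h0j⟩, ⟨hx₁.1, hx₁D⟩⟩
      have hx₂S : x₂ ∈ ⋃ i : { i : Fin n // (i : ℕ) < j }, (A ∩ ⇑(T ^ k i.1) ⁻¹' (Dd i.1)) :=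
        Set.mem_iUnion.mpr ⟨⟨i₂, hi₂⟩, ⟨hx₂.1, hx₂D⟩⟩
      have hdd := hδ x₂ hx₂S x₁ hx₁S hne12
      have hdlt : dist x₂ x₁ ≤ 2 / ((q : ℝ) + 1) := hDdiam q m x₂ hx₂.2 x₁ hx₁.2
      have h2q : 2 / ((q : ℝ) + 1) ≤ 2 / ((q₀ : ℝ) + 1) := by
        have hcast : ((q₀ : ℝ) + 1) ≤ ((q : ℝ) + 1) :=
          add_le_add_left (Nat.cast_le.mpr hq) 1
        gcongr
      linarith
    have hall0 : ∀ m, ∏ i, N i ω (auxC T j k A (D q m) B i) = 0 := by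
      intro m
      rw [← Finset.prod_filter_mul_prod_filter_not Finset.univ (fun i : Fin n => (i : ℕ) < j)]
      have h1 : ∏ i ∈ Finset.univ.filter (fun i : Fin n => (i : ℕ) < j),
          N i ω (auxC T j k A (D q m) B i)
          = ∏ i ∈ Finset.univ.filter (fun i : Fin n => (i : ℕ) < j),
            N i ω (⇑(T ^ k i) '' (A ∩ D q m)) :=
        Finset.prod_congr rfl fun i hi => by
          rw [auxC_lt T j k A _ B (Finset.mem_filter.mp hi).2]
      rw [h1, hzero m, zero_mul]
    calc (∑' m, ∏ i, N i ω (auxC T j k A (D q m) B i)) = ∑' _ : ℕ, (0 : ℝ≥0∞) :=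
        tsum_congr hall0
      _ = 0 := tsum_zero
  -- dominated convergence and the contradiction
  have hDCT := tendsto_lintegral_of_dominated_convergence
    (fun ω => ∏ i, N i ω (auxC T j k A Set.univ B i))
    (fun q => Measurable.ennreal_tsum fun m => Finset.measurable_prod _
      fun i _ => hNmeas i _ (hmeasC q m i))
    (fun q => Filter.Eventually.of_forall (hFle q)) hbtop htend0
  rw [lintegral_zero] at hDCT
  have hL := ge_of_tendsto' hDCT hlow
  have hne : ENNReal.ofReal c * μ A * ν {y | ∀ r, y r ∈ B r} ≠ 0 :=
    mul_ne_zero (mul_ne_zero (ENNReal.ofReal_pos.mpr hc).ne' hA0.ne') hνB.ne'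
  exact hne (le_zero_iff.mp hL)

end SuShi
end

section
/- Let N be a T-point process on an invertible probability-preserving system (Ω,ℱ,ℙ,S) with moments of order 2, whose second order moment measure satisfies E[N(A₁)N(A₂)] = μ(A₁ ∩ A₂) + μ(A₁)μ(A₂) for all A₁, A₂ ∈ 𝒜_f. Then N is free. -/
open MeasureTheory ProbabilityTheory Filter
open scoped ENNReal NNReal

namespace SuShi

/- Auxiliary lemmas -/

set_option linter.unusedSectionVars false
set_option maxHeartbeats 1000000

open Metric Set

section Pow
variable {X : Type*} [MeasurableSpace X]

lemma measurable_perm_pow (T : Equiv.Perm X) (hT : Measurable ⇑T) (n : ℕ) :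
    Measurable ⇑(T ^ n) := by
  induction n with
  | zero => simpa using measurable_id
  | succ n ih =>
    rw [pow_succ, Equiv.Perm.coe_mul]
    exact ih.comp hT

lemma measurable_perm_zpow (T : Equiv.Perm X) (hT : Measurable ⇑T)
    (hTinv : Measurable ⇑T.symm) (k : ℤ) : Measurable ⇑(T ^ k) := by
  cases k with
  | ofNat n => rw [Int.ofNat_eq_coe, zpow_natCast]; exact measurable_perm_pow T hT n
  | negSucc n =>
    rw [zpow_negSucc, ← inv_pow]
    refine measurable_perm_pow T⁻¹ ?_ (n + 1)
    rw [Equiv.Perm.inv_def]; exact hTinv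

lemma mp_perm_pow {μ : Measure X} (T : Equiv.Perm X) (hTpres : MeasurePreserving ⇑T μ μ)
    (n : ℕ) : MeasurePreserving ⇑(T ^ n) μ μ := by
  induction n with
  | zero => simpa using MeasurePreserving.id μ
  | succ n ih =>
    rw [pow_succ, Equiv.Perm.coe_mul]
    exact ih.comp hTpres

lemma mp_perm_zpow {μ : Measure X} (T : Equiv.Perm X) (hT : Measurable ⇑T)
    (hTinv : Measurable ⇑T.symm) (hTpres : MeasurePreserving ⇑T μ μ) (k : ℤ) :
    MeasurePreserving ⇑(T ^ k) μ μ := by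
  cases k with
  | ofNat n => rw [Int.ofNat_eq_coe, zpow_natCast]; exact mp_perm_pow T hTpres n
  | negSucc n =>
    rw [zpow_negSucc, ← inv_pow, Equiv.Perm.inv_def]
    have hsym : MeasurePreserving ⇑(T ^ (n + 1)).symm μ μ := by
      let e : X ≃ᵐ X :=
        ⟨(T ^ (n + 1) : Equiv.Perm X), measurable_perm_pow T hT (n + 1), by
          rw [← Equiv.Perm.inv_def, ← inv_pow]
          exact measurable_perm_pow T⁻¹ (by rw [Equiv.Perm.inv_def]; exact hTinv) (n + 1)⟩
      exact (mp_perm_pow T hTpres (n + 1) : MeasurePreserving ⇑e μ μ).symm e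
    rw [← Equiv.Perm.inv_def, ← inv_pow] at hsym
    exact hsym

lemma zpow_apply_add (T : Equiv.Perm X) (a b : ℤ) (x : X) :
    (T ^ (a + b)) x = (T ^ a) ((T ^ b) x) := by
  rw [zpow_add, Equiv.Perm.mul_apply]

lemma zpow_period_mul (T : Equiv.Perm X) {c : ℤ} {x : X} (hx : (T ^ c) x = x) (q : ℤ) :
    (T ^ (c * q)) x = x := by
  induction q using Int.induction_on with
  | zero => simp
  | succ q ih => rw [mul_add, mul_one, add_comm, zpow_apply_add, ih, hx]
  | pred q ih =>
    have hneg : (T ^ (-c)) x = x := by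
      conv_lhs => rw [← hx]
      rw [← zpow_apply_add, neg_add_cancel, zpow_zero, Equiv.Perm.coe_one, id_eq]
    rw [mul_sub, mul_one, sub_eq_add_neg, add_comm, zpow_apply_add, ih, hneg]

lemma zpow_period_mod (T : Equiv.Perm X) {c : ℤ} {x : X} (hx : (T ^ c) x = x) (i : ℤ) :
    (T ^ i) x = (T ^ (i % c)) x := by
  conv_lhs => rw [← Int.emod_add_mul_ediv i c]
  rw [zpow_apply_add, zpow_period_mul T hx (i / c)]

lemma iterate_eq_zpow (T : Equiv.Perm X) (n : ℕ) (x : X) :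
    (⇑T)^[n] x = (T ^ (n : ℤ)) x := by
  induction n with
  | zero => simp
  | succ n ih =>
    have hc : ((n + 1 : ℕ) : ℤ) = 1 + (n : ℤ) := by push_cast; ring
    rw [Function.iterate_succ_apply', ih, hc, zpow_apply_add, zpow_one]

end Pow

lemma no_finite_invariant {X : Type*} [MeasurableSpace X] {μ : Measure X} {T : X → X}
    (hTerg : Ergodic T μ) (hμinf : μ Set.univ = ⊤) {V : Set X} (hV : MeasurableSet V)
    (hinv : T ⁻¹' V = V) (h0 : μ V ≠ 0) (hfin : μ V ≠ ⊤) : False := by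
  rcases hTerg.ae_empty_or_univ hV hinv with h | h
  · exact h0 (ae_eq_empty.mp h)
  · have hc : μ Vᶜ = 0 := ae_eq_univ.mp h
    have : μ Set.univ ≤ μ V + μ Vᶜ := by
      rw [← Set.union_compl_self V]; exact measure_union_le _ _
    rw [hμinf, hc, add_zero] at this
    exact hfin (top_le_iff.mp this)

section Metric
variable {X : Type*} [MetricSpace X] [MeasurableSpace X] [BorelSpace X]
  {μ : Measure X} (T : Equiv.Perm X)

lemma exists_ball_pos (hμbdd : ∀ s : Set X, Bornology.IsBounded s → μ s < ⊤)
    (hμinf : μ Set.univ = ⊤) :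
    ∃ (x₀ : X) (r : ℕ), 0 < μ (closedBall x₀ r) ∧ μ (closedBall x₀ r) < ⊤ := by
  have hne : Nonempty X := by
    by_contra h
    rw [not_nonempty_iff] at h
    rw [Set.univ_eq_empty_iff.mpr h, measure_empty] at hμinf
    exact (ENNReal.top_ne_zero hμinf.symm)
  obtain ⟨x₀⟩ := hne
  by_contra h
  push_neg at h
  have hz : ∀ r : ℕ, μ (closedBall x₀ r) = 0 := by
    intro r
    rcases eq_or_lt_of_le (zero_le : 0 ≤ μ (closedBall x₀ r)) with h' | h'
    · exact h'.symm
    · exact absurd (h x₀ r h') (not_le.mpr (hμbdd _ isBounded_closedBall))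
  have huniv : Set.univ ⊆ ⋃ r : ℕ, closedBall x₀ r := by
    intro x _
    exact Set.mem_iUnion.mpr ⟨⌈dist x x₀⌉₊, mem_closedBall.mpr (Nat.le_ceil _)⟩
  have : μ Set.univ = 0 :=
    measure_mono_null huniv (measure_iUnion_null fun r => hz r)
  rw [hμinf] at this; exact ENNReal.top_ne_zero this

lemma atomless (hμbdd : ∀ s : Set X, Bornology.IsBounded s → μ s < ⊤)
    (hμinf : μ Set.univ = ⊤)
    (hT : Measurable ⇑T) (hTinv : Measurable ⇑T.symm)
    (hTpres : MeasurePreserving ⇑T μ μ)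
    (hTcons : Conservative ⇑T μ) (hTerg : Ergodic ⇑T μ) (x : X) : μ {x} = 0 := by
  by_contra h0
  obtain ⟨y, hy, m, hm, hmx⟩ := hTcons.exists_mem_iterate_mem
    (measurableSet_singleton x).nullMeasurableSet h0
  rw [Set.mem_singleton_iff] at hy hmx
  rw [hy] at hmx
  have hper : (T ^ (m : ℤ)) x = x := by rw [← iterate_eq_zpow]; exact hmx
  have hmpos : (0 : ℤ) < (m : ℤ) := by exact_mod_cast Nat.pos_of_ne_zero hm
  set O : Set X := ⋃ i : ℤ, ({(T ^ i) x} : Set X) with hO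
  have hOmeas : MeasurableSet O := MeasurableSet.iUnion fun i => measurableSet_singleton _
  have hOinv : ⇑T ⁻¹' O = O := by
    ext z
    simp only [hO, Set.mem_preimage, Set.mem_iUnion, Set.mem_singleton_iff]
    constructor
    · rintro ⟨i, hi⟩
      refine ⟨i - 1, ?_⟩
      have h2 : (T ^ i) x = T ((T ^ (i - 1 : ℤ)) x) := by
        conv_lhs => rw [show i = 1 + (i - 1) by ring]
        rw [zpow_apply_add, zpow_one]
      rw [h2] at hi
      exact (T.injective hi)
    · rintro ⟨i, hi⟩
      refine ⟨1 + i, ?_⟩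
      rw [zpow_apply_add, ← hi, zpow_one]
  have hO0 : μ O ≠ 0 := by
    intro hz
    refine h0 (measure_mono_null ?_ hz)
    intro z hz'
    rw [Set.mem_singleton_iff] at hz'
    subst hz'
    exact Set.mem_iUnion.mpr ⟨0, by simp⟩
  have hOfin : μ O ≠ ⊤ := by
    have hsub : O ⊆ ⋃ i ∈ Finset.range m, ({(T ^ (i : ℤ)) x} : Set X) := by
      intro z hz
      rw [hO, Set.mem_iUnion] at hz
      obtain ⟨i, hi⟩ := hz
      rw [Set.mem_singleton_iff] at hi
      rw [zpow_period_mod T hper i] at hi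
      have h1 : (0 : ℤ) ≤ i % (m : ℤ) := Int.emod_nonneg i (by exact_mod_cast hm)
      have h2 : i % (m : ℤ) < (m : ℤ) := Int.emod_lt_of_pos i hmpos
      have hlt : (i % (m : ℤ)).toNat < m := (Int.toNat_lt' (Nat.pos_of_ne_zero hm)).mpr h2
      refine Set.mem_biUnion (Finset.mem_range.mpr hlt) ?_
      rw [Set.mem_singleton_iff, Int.toNat_of_nonneg h1]; exact hi
    refine ne_top_of_le_ne_top ?_ (measure_mono hsub)
    refine (lt_top_iff_ne_top.mp ?_)
    refine lt_of_le_of_lt (measure_biUnion_finset_le _ _) ?_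
    exact ENNReal.sum_lt_top.mpr fun i _ => hμbdd _ Bornology.isBounded_singleton
  exact no_finite_invariant hTerg hμinf hOmeas hOinv hO0 hOfin

lemma fixnull_pos [TopologicalSpace.SeparableSpace X]
    (hμbdd : ∀ s : Set X, Bornology.IsBounded s → μ s < ⊤)
    (hμinf : μ Set.univ = ⊤)
    (hT : Measurable ⇑T) (hTinv : Measurable ⇑T.symm)
    (hTpres : MeasurePreserving ⇑T μ μ)
    (hTerg : Ergodic ⇑T μ) {k : ℤ} (hk : 0 < k) :
    μ {x | (T ^ k) x = x} = 0 := by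
  haveI : SecondCountableTopology X := UniformSpace.secondCountable_of_separable X
  set F : Set X := {x | (T ^ k) x = x} with hF
  have hFmeas : MeasurableSet F := by
    have hc : Measurable fun x => ((T ^ k) x, x) :=
      (measurable_perm_zpow T hT hTinv k).prodMk measurable_id
    have heq : F = (fun x => ((T ^ k) x, x)) ⁻¹' (Set.diagonal X) := by
      ext x
      simp [hF, Set.diagonal, eq_comm]
    rw [heq]
    exact hc isClosed_diagonal.measurableSet
  have hFinv : ⇑T ⁻¹' F = F := by
    ext z
    simp only [hF, Set.mem_preimage, Set.mem_setOf_eq]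
    have h1 : (T ^ k) (T z) = T ((T ^ k) z) := by
      have e1 : (T ^ (k + 1)) z = (T ^ k) (T z) := by rw [zpow_apply_add, zpow_one]
      have e2 : (T ^ (1 + k)) z = T ((T ^ k) z) := by rw [zpow_apply_add, zpow_one]
      rw [← e1, ← e2, add_comm k 1]
    rw [h1]
    exact T.injective.eq_iff
  rcases hTerg.ae_empty_or_univ hFmeas hFinv with h | h
  · exact ae_eq_empty.mp h
  · exfalso
    have hFc : μ Fᶜ = 0 := ae_eq_univ.mp h
    obtain ⟨x₀, r, hball0, hballfin⟩ := exists_ball_pos hμbdd hμinf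
    set U : Set X := closedBall x₀ r ∩ F with hU
    have hUmeas : MeasurableSet U := measurableSet_closedBall.inter hFmeas
    have hU0 : μ U ≠ 0 := by
      intro hz
      have : μ (closedBall x₀ r) ≤ μ U + μ Fᶜ := by
        refine le_trans (measure_mono ?_) (measure_union_le _ _)
        intro z hz'
        by_cases hzF : z ∈ F
        · exact Or.inl ⟨hz', hzF⟩
        · exact Or.inr hzF
      rw [hz, hFc, add_zero] at this
      exact hball0.ne' (le_antisymm this zero_le)
    have hUfin : μ U ≠ ⊤ :=
      ne_top_of_le_ne_top hballfin.ne (measure_mono Set.inter_subset_left)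
    set V : Set X := ⋃ i : ℤ, ⇑(T ^ i) ⁻¹' U with hV
    have hVmeas : MeasurableSet V :=
      MeasurableSet.iUnion fun i => (measurable_perm_zpow T hT hTinv i) hUmeas
    have hVinv : ⇑T ⁻¹' V = V := by
      ext z
      simp only [hV, Set.mem_preimage, Set.mem_iUnion]
      constructor
      · rintro ⟨i, hi⟩
        refine ⟨i + 1, ?_⟩
        rw [zpow_apply_add, zpow_one]; exact hi
      · rintro ⟨i, hi⟩
        refine ⟨i - 1, ?_⟩
        have heq : (T ^ (i - 1 : ℤ)) (T z) = (T ^ i) z := by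
          have e1 : (T ^ (i - 1 + 1 : ℤ)) z = (T ^ (i - 1 : ℤ)) (T z) := by
            rw [zpow_apply_add, zpow_one]
          rw [← e1, show i - 1 + 1 = i by ring]
        rw [heq]; exact hi
    have hV0 : μ V ≠ 0 := by
      intro hz
      refine hU0 (measure_mono_null ?_ hz)
      intro z hz'
      exact Set.mem_iUnion.mpr ⟨0, by simpa using hz'⟩
    have hVfin : μ V ≠ ⊤ := by
      have hsub : V ⊆ ⋃ j ∈ Finset.range k.toNat, ⇑(T ^ (-(j:ℤ))) ⁻¹' U := by
        intro z hz
        rw [hV, Set.mem_iUnion] at hz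
        obtain ⟨i, hi⟩ := hz
        rw [Set.mem_preimage] at hi
        set u : X := (T ^ i) z with hu
        have huF : u ∈ F := hU ▸ hi |>.2
        have hzu : z = (T ^ (-i)) u := by
          rw [hu, ← zpow_apply_add, neg_add_cancel, zpow_zero, Equiv.Perm.coe_one, id_eq]
        have hper : (T ^ k) u = u := huF
        have hmod : (T ^ (-i)) u = (T ^ ((-i) % k)) u := zpow_period_mod T hper (-i)
        have h1 : (0:ℤ) ≤ (-i) % k := Int.emod_nonneg _ (by omega)
        have h2 : (-i) % k < k := Int.emod_lt_of_pos _ hk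
        have hlt : ((-i) % k).toNat < k.toNat := by omega
        refine Set.mem_biUnion (Finset.mem_range.mpr hlt) ?_
        rw [Set.mem_preimage]
        have : (T ^ (-(((-i) % k).toNat : ℤ))) z = u := by
          rw [hzu, hmod, ← zpow_apply_add, Int.toNat_of_nonneg h1, neg_add_cancel,
            zpow_zero, Equiv.Perm.coe_one, id_eq]
        rw [this]; exact hi
      refine ne_top_of_le_ne_top ?_ (measure_mono hsub)
      refine lt_top_iff_ne_top.mp (lt_of_le_of_lt (measure_biUnion_finset_le _ _) ?_)
      refine ENNReal.sum_lt_top.mpr fun j _ => ?_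
      rw [(mp_perm_zpow T hT hTinv hTpres (-(j:ℤ))).measure_preimage
        hUmeas.nullMeasurableSet]
      exact lt_top_iff_ne_top.mpr hUfin
    exact no_finite_invariant hTerg hμinf hVmeas hVinv hV0 hVfin

lemma fix_iff_neg (k : ℤ) (x : X) : (T ^ k) x = x ↔ (T ^ (-k)) x = x := by
  constructor
  · intro h
    conv_lhs => rw [← h]
    rw [← zpow_apply_add, neg_add_cancel, zpow_zero, Equiv.Perm.coe_one, id_eq]
  · intro h
    conv_lhs => rw [← h]
    rw [← zpow_apply_add, add_neg_cancel, zpow_zero, Equiv.Perm.coe_one, id_eq]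

lemma fixnull [TopologicalSpace.SeparableSpace X]
    (hμbdd : ∀ s : Set X, Bornology.IsBounded s → μ s < ⊤)
    (hμinf : μ Set.univ = ⊤)
    (hT : Measurable ⇑T) (hTinv : Measurable ⇑T.symm)
    (hTpres : MeasurePreserving ⇑T μ μ)
    (hTerg : Ergodic ⇑T μ) {k : ℤ} (hk : k ≠ 0) :
    μ {x | (T ^ k) x = x} = 0 := by
  haveI : SecondCountableTopology X := UniformSpace.secondCountable_of_separable X
  -- reduce to positive k
  rcases lt_or_gt_of_ne hk with hneg | hpos
  · have hs : {x | (T ^ k) x = x} = {x | (T ^ (-k)) x = x} := by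
      ext x; exact fix_iff_neg T k x
    rw [hs]
    exact fixnull_pos T hμbdd hμinf hT hTinv hTpres hTerg (by omega)
  · exact fixnull_pos T hμbdd hμinf hT hTinv hTpres hTerg hpos

end Metric

section Cells
variable {X : Type*} [MetricSpace X] [MeasurableSpace X] [BorelSpace X]

/-- Cell `i` at scale `δ` for the sequence `q`. -/
def cellSet (q : ℕ → X) (δ : ℝ) (i : ℕ) : Set X :=
  Metric.ball (q i) δ \ ⋃ i' < i, Metric.ball (q i') δ

lemma cellSet_meas (q : ℕ → X) (δ : ℝ) (i : ℕ) : MeasurableSet (cellSet q δ i) :=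
  measurableSet_ball.diff
    (MeasurableSet.iUnion fun _ => MeasurableSet.iUnion fun _ => measurableSet_ball)

lemma cellSet_unique {q : ℕ → X} {δ : ℝ} {x : X} {i i' : ℕ}
    (h : x ∈ cellSet q δ i) (h' : x ∈ cellSet q δ i') : i = i' := by
  by_contra hne
  rcases lt_or_gt_of_ne hne with hlt | hlt
  · exact h'.2 (Set.mem_biUnion hlt h.1)
  · exact h.2 (Set.mem_biUnion hlt h'.1)

lemma cellSet_exists {q : ℕ → X} (hq : DenseRange q) {δ : ℝ} (hδ : 0 < δ) (x : X) :
    ∃ i, x ∈ cellSet q δ i := by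
  have hex : ∃ i, dist x (q i) < δ := Metric.denseRange_iff.mp hq x δ hδ
  refine ⟨Nat.find hex, Metric.mem_ball.mpr (Nat.find_spec hex), ?_⟩
  intro hmem
  simp only [Set.mem_iUnion] at hmem
  obtain ⟨i', hi', hmem⟩ := hmem
  exact Nat.find_min hex hi' (Metric.mem_ball.mp hmem)

lemma cellSet_diam {q : ℕ → X} {δ : ℝ} {x y : X} {i : ℕ}
    (hx : x ∈ cellSet q δ i) (hy : y ∈ cellSet q δ i) : dist x y < 2 * δ := by
  have h1 : dist x (q i) < δ := Metric.mem_ball.mp hx.1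
  have h2 : dist y (q i) < δ := Metric.mem_ball.mp hy.1
  calc dist x y ≤ dist x (q i) + dist y (q i) := dist_triangle_right x y (q i)
  _ < δ + δ := add_lt_add h1 h2
  _ = 2 * δ := by ring

end Cells

section BadNull

open Metric Set

variable {X : Type*} [MetricSpace X] [MeasurableSpace X] [BorelSpace X]

lemma bad_null [TopologicalSpace.SeparableSpace X] {μ : Measure X}
    (hμbdd : ∀ s : Set X, Bornology.IsBounded s → μ s < ⊤)
    (T : Equiv.Perm X) (hT : Measurable ⇑T) (hTinv : Measurable ⇑T.symm)
    (hTpres : MeasurePreserving ⇑T μ μ)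
    (hatom : ∀ x : X, μ {x} = 0)
    {Ω : Type*} [MeasurableSpace Ω] (P : Measure Ω)
    (N : Ω → Measure X) (hNmeas : Measurable N)
    (hNnull : ∀ A : Set X, MeasurableSet A → μ A = 0 → ∀ᵐ ω ∂P, N ω A = 0)
    (hM2 : ∀ A₁ A₂ : Set X, MeasurableSet A₁ → MeasurableSet A₂ →
      0 < μ A₁ → μ A₁ < ⊤ → 0 < μ A₂ → μ A₂ < ⊤ →
      ∫⁻ ω, N ω A₁ * N ω A₂ ∂P = μ (A₁ ∩ A₂) + μ A₁ * μ A₂)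
    (k : ℤ) (x₀ : X) {q : ℕ → X} (hq : DenseRange q) (j r : ℕ) :
    P {ω | ∃ x : X, (1 : ℝ)/(j+1) < dist x ((T ^ k) x) ∧
      x ∈ closedBall x₀ r ∧ (T ^ k) x ∈ closedBall x₀ r ∧
      1 ≤ N ω {x} ∧ 1 ≤ N ω {(T ^ k) x}} = 0 := by
  haveI : SecondCountableTopology X := UniformSpace.secondCountable_of_separable X
  have hTk : Measurable ⇑(T ^ k) := measurable_perm_zpow T hT hTinv k
  have hTnk : Measurable ⇑(T ^ (-k)) := measurable_perm_zpow T hT hTinv (-k)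
  have hmpnk : MeasurePreserving ⇑(T ^ (-k)) μ μ := mp_perm_zpow T hT hTinv hTpres (-k)
  have hInv1 : ∀ x : X, (T ^ (-k)) ((T ^ k) x) = x := by
    intro x
    rw [← zpow_apply_add, neg_add_cancel, zpow_zero, Equiv.Perm.coe_one, id_eq]
  have hInv2 : ∀ x : X, (T ^ k) ((T ^ (-k)) x) = x := by
    intro x
    rw [← zpow_apply_add, add_neg_cancel, zpow_zero, Equiv.Perm.coe_one, id_eq]
  set ε : ℝ := (1 : ℝ)/(j+1) with hεdef
  have hε : 0 < ε := by positivity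
  set R : Set X := closedBall x₀ r ∩ ⇑(T ^ k) ⁻¹' (closedBall x₀ r) with hRdef
  have hRmeas : MeasurableSet R := measurableSet_closedBall.inter (hTk measurableSet_closedBall)
  have hRfin : μ R < ⊤ :=
    lt_of_le_of_lt (measure_mono inter_subset_left) (hμbdd _ isBounded_closedBall)
  set W : Set X := R ∩ {x | ε < dist x ((T ^ k) x)} with hWdef
  have hWmeas : MeasurableSet W :=
    hRmeas.inter (measurableSet_lt measurable_const (measurable_id.dist hTk))
  have hWsubR : W ⊆ R := inter_subset_left
  set δ : ℕ → ℝ := fun n => min ((1/2 : ℝ)^n) (ε/3) with hδdef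
  have hδpos : ∀ n, 0 < δ n := fun n => lt_min (by positivity) (by positivity)
  have hδanti : Antitone δ := fun a b hab =>
    min_le_min (pow_le_pow_of_le_one (by norm_num) (by norm_num) hab) le_rfl
  have hδle : ∀ n, δ n ≤ ε/3 := fun n => min_le_right _ _
  have hδle2 : ∀ n, δ n ≤ (1/2 : ℝ)^n := fun n => min_le_left _ _
  set C : ℕ → ℕ → Set X := fun n i => cellSet q (δ n) i with hCdef
  have hCmeas : ∀ n i, MeasurableSet (C n i) := fun n i => cellSet_meas q (δ n) i
  have hCex : ∀ n x, ∃ i, x ∈ C n i := fun n x => cellSet_exists hq (hδpos n) x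
  -- rectangles
  set A : ℕ → ℕ × ℕ → Set X :=
    fun n p => (C n p.1 ∩ ⇑(T ^ k) ⁻¹' (C n p.2)) ∩ W with hAdef
  have hAmeas : ∀ n p, MeasurableSet (A n p) :=
    fun n p => (((hCmeas n p.1).inter (hTk (hCmeas n p.2))).inter hWmeas)
  have hAsubW : ∀ n p, A n p ⊆ W := fun n p => inter_subset_right
  have hAsubC1 : ∀ n p, A n p ⊆ C n p.1 :=
    fun n p => subset_trans inter_subset_left inter_subset_left
  set B : ℕ → ℕ × ℕ → Set X := fun n p => ⇑(T ^ (-k)) ⁻¹' (A n p) with hBdef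
  have hBmeas : ∀ n p, MeasurableSet (B n p) := fun n p => hTnk (hAmeas n p)
  have hBval : ∀ n p, μ (B n p) = μ (A n p) :=
    fun n p => hmpnk.measure_preimage (hAmeas n p).nullMeasurableSet
  have hBsubC2 : ∀ n p, B n p ⊆ C n p.2 := by
    intro n p y hy
    rw [hBdef, mem_preimage] at hy
    have h2 : (T ^ (-k)) y ∈ ⇑(T ^ k) ⁻¹' (C n p.2) := hy.1.2
    rw [mem_preimage, hInv2] at h2
    exact h2
  have hAempty : ∀ n p, p.1 = p.2 → A n p = ∅ := by
    intro n p hpp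
    ext x
    simp only [mem_empty_iff_false, iff_false]
    intro hx
    have hx1 : x ∈ C n p.1 := hAsubC1 n p hx
    have hx2 : (T ^ k) x ∈ C n p.2 := by
      have := (hx.1).2; rwa [mem_preimage] at this
    rw [← hpp] at hx2
    have hdiam : dist x ((T ^ k) x) < 2 * δ n := cellSet_diam hx1 hx2
    have hxW : x ∈ W := hAsubW n p hx
    have hdist : ε < dist x ((T ^ k) x) := hxW.2
    have : (2 : ℝ) * δ n ≤ 2 * (ε/3) := by linarith [hδle n]
    linarith
  -- the key integral bound
  have hint : ∀ n p, ∫⁻ ω, N ω (A n p) * N ω (B n p) ∂P ≤ μ (A n p) * μ (A n p) := by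
    intro n p
    rcases eq_or_ne (μ (A n p)) 0 with h0 | h0
    · have hae : ∀ᵐ ω ∂P, N ω (A n p) = 0 := hNnull _ (hAmeas n p) h0
      have hz : ∫⁻ ω, N ω (A n p) * N ω (B n p) ∂P = 0 := by
        rw [← lintegral_zero]
        refine lintegral_congr_ae (hae.mono fun ω hzw => ?_)
        show N ω (A n p) * N ω (B n p) = 0
        rw [hzw, zero_mul]
      rw [hz]; exact zero_le
    · have hApos : 0 < μ (A n p) := pos_iff_ne_zero.mpr h0
      have hAfin : μ (A n p) < ⊤ :=
        lt_of_le_of_lt (measure_mono ((hAsubW n p).trans hWsubR)) hRfin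
      have hne : p.1 ≠ p.2 := by
        intro hpp
        rw [hAempty n p hpp, measure_empty] at h0
        exact h0 rfl
      have hABdisj : A n p ∩ B n p = ∅ := by
        apply Set.eq_empty_of_subset_empty
        intro x hx
        exact hne (cellSet_unique (hAsubC1 n p hx.1) (hBsubC2 n p hx.2))
      have heq := hM2 (A n p) (B n p) (hAmeas n p) (hBmeas n p) hApos hAfin
        (by rw [hBval]; exact hApos) (by rw [hBval]; exact hAfin)
      rw [heq, hABdisj, measure_empty, zero_add, hBval]
  -- the function g n
  set g : ℕ → Ω → ℝ≥0∞ := fun n ω => ∑' p : ℕ × ℕ, N ω (A n p) * N ω (B n p) with hgdef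
  have hgmeas : ∀ n, Measurable (g n) := by
    intro n
    refine Measurable.ennreal_tsum fun p => Measurable.mul ?_ ?_
    · exact (Measure.measurable_coe (hAmeas n p)).comp hNmeas
    · exact (Measure.measurable_coe (hBmeas n p)).comp hNmeas
  -- the function h n
  set h : ℕ → X → ℝ≥0∞ :=
    fun n x => ∑' i : ℕ, (C n i).indicator (fun _ => μ (C n i ∩ R)) x with hhdef
  have hhmeas : ∀ n, Measurable (h n) :=
    fun n => Measurable.ennreal_tsum fun i => measurable_const.indicator (hCmeas n i)
  have hhval : ∀ n x i, x ∈ C n i → h n x = μ (C n i ∩ R) := by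
    intro n x i hi
    simp only [hhdef]
    rw [tsum_eq_single i ?_]
    · exact indicator_of_mem hi _
    · intro i' hi'
      refine indicator_of_notMem (fun hmem => hi' ?_) _
      exact cellSet_unique hmem hi
  -- chain part 1 : integral of g
  have hgint : ∀ n, ∫⁻ ω, g n ω ∂P ≤ ∑' p : ℕ × ℕ, μ (A n p) * μ (A n p) := by
    intro n
    simp only [hgdef]
    have hmeasp : ∀ p : ℕ × ℕ, AEMeasurable (fun ω => N ω (A n p) * N ω (B n p)) P :=
      fun p => (((Measure.measurable_coe (hAmeas n p)).comp hNmeas).mul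
        ((Measure.measurable_coe (hBmeas n p)).comp hNmeas)).aemeasurable
    rw [lintegral_tsum hmeasp]
    exact ENNReal.tsum_le_tsum (hint n)
  -- chain part 2 : sum of squares vs integral of h
  have hsum2 : ∀ n, ∑' p : ℕ × ℕ, μ (A n p) * μ (A n p) ≤
      ∫⁻ x, W.indicator (h n) x ∂μ := by
    intro n
    have hterm : ∀ p, μ (A n p) * μ (A n p) ≤ ∫⁻ x, (A n p).indicator (h n) x ∂μ := by
      intro p
      rw [lintegral_indicator (hAmeas n p)]
      have hc : μ (A n p) * μ (A n p) = ∫⁻ _ in A n p, μ (A n p) ∂μ := by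
        rw [setLIntegral_const, mul_comm]
      rw [hc]
      refine setLIntegral_mono (hhmeas n) fun x hx => ?_
      rw [hhval n x p.1 (hAsubC1 n p hx)]
      refine measure_mono fun y hy => ?_
      exact ⟨(hAsubC1 n p hy : y ∈ C n p.1), hWsubR (hAsubW n p hy)⟩
    have hptw : ∀ x, ∑' p : ℕ × ℕ, (A n p).indicator (h n) x ≤ W.indicator (h n) x := by
      intro x
      by_cases hx : ∃ p, x ∈ A n p
      · obtain ⟨p0, hp0⟩ := hx
        rw [tsum_eq_single p0 ?_]
        · rw [indicator_of_mem hp0, indicator_of_mem (hAsubW n p0 hp0)]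
        · intro p hp
          refine indicator_of_notMem (fun hxp => hp ?_) _
          have h1 : p.1 = p0.1 := cellSet_unique (hAsubC1 n p hxp) (hAsubC1 n p0 hp0)
          have hx2 : (T ^ k) x ∈ C n p.2 := by
            have := hxp.1.2; rwa [mem_preimage] at this
          have hx2' : (T ^ k) x ∈ C n p0.2 := by
            have := hp0.1.2; rwa [mem_preimage] at this
          have h2 : p.2 = p0.2 := cellSet_unique hx2 hx2'
          exact Prod.ext h1 h2
      · push_neg at hx
        have hzero : ∀ p : ℕ × ℕ, (A n p).indicator (h n) x = 0 :=
          fun p => indicator_of_notMem (hx p) _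
        rw [tsum_congr hzero, tsum_zero]
        exact zero_le
    calc ∑' p : ℕ × ℕ, μ (A n p) * μ (A n p)
        ≤ ∑' p : ℕ × ℕ, ∫⁻ x, (A n p).indicator (h n) x ∂μ := ENNReal.tsum_le_tsum hterm
      _ = ∫⁻ x, ∑' p : ℕ × ℕ, (A n p).indicator (h n) x ∂μ :=
          (lintegral_tsum fun p => ((hhmeas n).indicator (hAmeas n p)).aemeasurable).symm
      _ ≤ ∫⁻ x, W.indicator (h n) x ∂μ := lintegral_mono hptw
  -- the limit
  have hlim : Filter.Tendsto (fun n => ∫⁻ x, W.indicator (h n) x ∂μ)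
      Filter.atTop (nhds 0) := by
    have hdct := tendsto_lintegral_of_dominated_convergence (μ := μ)
      (F := fun n x => W.indicator (h n) x) (f := fun _ => 0)
      (W.indicator fun _ => μ (closedBall x₀ r))
      (fun n => (hhmeas n).indicator hWmeas)
      ?_ ?_ ?_
    · simpa using hdct
    · -- bound
      intro n
      refine Filter.Eventually.of_forall fun x => ?_
      show W.indicator (h n) x ≤ W.indicator (fun _ => μ (closedBall x₀ r)) x
      by_cases hx : x ∈ W
      · rw [indicator_of_mem hx, indicator_of_mem hx]
        obtain ⟨i, hi⟩ := hCex n x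
        rw [hhval n x i hi]
        exact measure_mono (inter_subset_right.trans inter_subset_left)
      · rw [indicator_of_notMem hx, indicator_of_notMem hx]
    · -- finiteness of the bound
      rw [lintegral_indicator_const hWmeas]
      exact ENNReal.mul_ne_top (hμbdd _ isBounded_closedBall).ne
        (lt_of_le_of_lt (measure_mono hWsubR) hRfin).ne
    · -- pointwise limit
      refine Filter.Eventually.of_forall fun x => ?_
      show Filter.Tendsto (fun n => W.indicator (h n) x) Filter.atTop (nhds 0)
      by_cases hx : x ∈ W
      · simp only [indicator_of_mem hx]
        have hub : ∀ n, h n x ≤ μ (closedBall x (2 * δ n) ∩ R) := by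
          intro n
          obtain ⟨i, hi⟩ := hCex n x
          rw [hhval n x i hi]
          refine measure_mono (inter_subset_inter_left _ fun y hy => ?_)
          exact mem_closedBall.mpr (cellSet_diam hy hi).le
        have hster : μ (⋂ n, closedBall x (2 * δ n) ∩ R) = 0 := by
          refine measure_mono_null ?_ (hatom x)
          intro y hy
          simp only [mem_iInter] at hy
          have hd : ∀ n, dist y x ≤ 2 * δ n :=
            fun n => mem_closedBall.mp (hy n).1
          have htnd : Filter.Tendsto (fun n => 2 * δ n) Filter.atTop (nhds 0) := by
            have h2 : Filter.Tendsto (fun n : ℕ => 2 * (1/2 : ℝ)^n)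
                Filter.atTop (nhds 0) := by
              simpa using (tendsto_pow_atTop_nhds_zero_of_lt_one
                (by norm_num : (0:ℝ) ≤ 1/2) (by norm_num : (1/2 : ℝ) < 1)).const_mul 2
            refine squeeze_zero (fun n => by positivity) (fun n => ?_) h2
            have := hδle2 n; linarith
          have : dist y x ≤ 0 := ge_of_tendsto' htnd hd
          have : dist y x = 0 := le_antisymm this dist_nonneg
          rw [mem_singleton_iff]
          exact dist_eq_zero.mp this
        have hmono : Filter.Tendsto (fun n => μ (closedBall x (2 * δ n) ∩ R))
            Filter.atTop (nhds 0) := by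
          have := tendsto_measure_iInter_atTop (μ := μ)
            (s := fun n => closedBall x (2 * δ n) ∩ R)
            (fun n => (measurableSet_closedBall.inter hRmeas).nullMeasurableSet)
            (fun a b hab => inter_subset_inter
              (closedBall_subset_closedBall (by have := hδanti hab; linarith)) subset_rfl)
            ⟨0, (lt_of_le_of_lt (measure_mono inter_subset_right) hRfin).ne⟩
          rwa [hster] at this
        exact tendsto_of_tendsto_of_tendsto_of_le_of_le tendsto_const_nhds hmono
          (fun n => zero_le) hub
      · simp only [indicator_of_notMem hx]
        exact tendsto_const_nhds
  -- Bad set inclusion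
  set Bad : Set Ω := {ω | ∃ x : X, ε < dist x ((T ^ k) x) ∧
      x ∈ closedBall x₀ r ∧ (T ^ k) x ∈ closedBall x₀ r ∧
      1 ≤ N ω {x} ∧ 1 ≤ N ω {(T ^ k) x}} with hBaddef
  have hBadsub : ∀ n, Bad ⊆ {ω | 1 ≤ g n ω} := by
    intro n ω hω
    obtain ⟨x, hd, hx1, hx2, hN1, hN2⟩ := hω
    have hxW : x ∈ W := ⟨⟨hx1, by rwa [mem_preimage]⟩, hd⟩
    obtain ⟨i, hi⟩ := hCex n x
    obtain ⟨i', hi'⟩ := hCex n ((T ^ k) x)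
    have hxA : x ∈ A n (i, i') := ⟨⟨hi, by rwa [mem_preimage]⟩, hxW⟩
    have hxB : (T ^ k) x ∈ B n (i, i') := by
      rw [hBdef, mem_preimage, hInv1]; exact hxA
    have h1 : (1 : ℝ≥0∞) ≤ N ω (A n (i, i')) :=
      le_trans hN1 (measure_mono (singleton_subset_iff.mpr hxA))
    have h2 : (1 : ℝ≥0∞) ≤ N ω (B n (i, i')) :=
      le_trans hN2 (measure_mono (singleton_subset_iff.mpr hxB))
    calc (1 : ℝ≥0∞) = 1 * 1 := (one_mul 1).symm
      _ ≤ N ω (A n (i, i')) * N ω (B n (i, i')) := mul_le_mul' h1 h2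
      _ ≤ g n ω := ENNReal.le_tsum (i, i')
  have hchain : ∀ n, P Bad ≤ ∫⁻ x, W.indicator (h n) x ∂μ := by
    intro n
    calc P Bad ≤ P {ω | 1 ≤ g n ω} := measure_mono (hBadsub n)
      _ ≤ ∫⁻ ω, g n ω ∂P := by
          have := mul_meas_ge_le_lintegral₀ (μ := P) (hgmeas n).aemeasurable 1
          simpa using this
      _ ≤ ∑' p : ℕ × ℕ, μ (A n p) * μ (A n p) := hgint n
      _ ≤ ∫⁻ x, W.indicator (h n) x ∂μ := hsum2 n
  have hfinal : P Bad ≤ 0 := ge_of_tendsto hlim (Filter.Eventually.of_forall hchain)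
  exact le_antisymm hfinal zero_le

end BadNull

/-- a square integrable `T`-point process whose second order moment measure is
`μ(A₁ ∩ A₂) + μ(A₁)μ(A₂)` is free. -/
theorem stmt4 {X : Type*} [MetricSpace X] [CompleteSpace X] [TopologicalSpace.SeparableSpace X]
    [MeasurableSpace X] [BorelSpace X]
    (μ : Measure X) (hμbdd : ∀ s : Set X, Bornology.IsBounded s → μ s < ⊤)
    (hμinf : μ Set.univ = ⊤)
    (T : Equiv.Perm X) (hT : Measurable ⇑T) (hTinv : Measurable ⇑T.symm)
    (hTpres : MeasurePreserving ⇑T μ μ)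
    (hTcons : Conservative ⇑T μ) (hTerg : Ergodic ⇑T μ)
    {Ω : Type*} [MeasurableSpace Ω] (P : Measure Ω) [IsProbabilityMeasure P]
    (S : Equiv.Perm Ω) (hS : Measurable ⇑S) (hSinv : Measurable ⇑S.symm)
    (hSP : MeasurePreserving ⇑S P P)
    (N : Ω → Measure X) (hN : IsTPointProcess μ T P ⇑S N)
    (hmom : HasMomentsOfOrder P N μ 2)
    (hM2 : ∀ A₁ A₂ : Set X, MeasurableSet A₁ → MeasurableSet A₂ →
      0 < μ A₁ → μ A₁ < ⊤ → 0 < μ A₂ → μ A₂ < ⊤ →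
      ∫⁻ ω, N ω A₁ * N ω A₂ ∂P = μ (A₁ ∩ A₂) + μ A₁ * μ A₂) :
    IsFree T P N := by
  haveI : SecondCountableTopology X := UniformSpace.secondCountable_of_separable X
  have hXne : Nonempty X := by
    by_contra hne
    rw [not_nonempty_iff] at hne
    rw [Set.univ_eq_empty_iff.mpr hne, measure_empty] at hμinf
    exact ENNReal.top_ne_zero hμinf.symm
  haveI := hXne
  obtain ⟨x₀⟩ := hXne
  have hq : DenseRange (TopologicalSpace.denseSeq X) := TopologicalSpace.denseRange_denseSeq X
  have hatom : ∀ x : X, μ {x} = 0 :=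
    atomless T hμbdd hμinf hT hTinv hTpres hTcons hTerg
  intro k hk
  have hTk : Measurable ⇑(T ^ k) := measurable_perm_zpow T hT hTinv k
  -- the fixed-point set is null
  have hFnull : μ {x | (T ^ k) x = x} = 0 :=
    fixnull T hμbdd hμinf hT hTinv hTpres hTerg hk
  have hFmeas : MeasurableSet {x | (T ^ k) x = x} := by
    have hc : Measurable fun x => ((T ^ k) x, x) := hTk.prodMk measurable_id
    have heq : {x | (T ^ k) x = x} = (fun x => ((T ^ k) x, x)) ⁻¹' (Set.diagonal X) := by
      ext x; simp [Set.diagonal]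
    rw [heq]
    exact hc isClosed_diagonal.measurableSet
  have hNFix : ∀ᵐ ω ∂P, N ω {x | (T ^ k) x = x} = 0 := hN.null _ hFmeas hFnull
  -- bad sets are null
  have hBadnull : ∀ j r : ℕ, ∀ᵐ ω ∂P, ω ∉ {ω : Ω | ∃ x : X,
      (1 : ℝ)/(j+1) < dist x ((T ^ k) x) ∧
      x ∈ Metric.closedBall x₀ r ∧ (T ^ k) x ∈ Metric.closedBall x₀ r ∧
      1 ≤ N ω {x} ∧ 1 ≤ N ω {(T ^ k) x}} := by
    intro j r
    exact measure_eq_zero_iff_ae_notMem.mp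
      (bad_null hμbdd T hT hTinv hTpres hatom P N hN.measurable hN.null hM2 k x₀ hq j r)
  have hBadall : ∀ᵐ ω ∂P, ∀ j r : ℕ, ω ∉ {ω : Ω | ∃ x : X,
      (1 : ℝ)/(j+1) < dist x ((T ^ k) x) ∧
      x ∈ Metric.closedBall x₀ r ∧ (T ^ k) x ∈ Metric.closedBall x₀ r ∧
      1 ≤ N ω {x} ∧ 1 ≤ N ω {(T ^ k) x}} :=
    ae_all_iff.mpr fun j => ae_all_iff.mpr fun r => hBadnull j r
  filter_upwards [hNFix, hBadall] with ω hFix hBad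
  rintro x ⟨hx1, hx2⟩
  by_cases hfix : (T ^ k) x = x
  · have hle : N ω {x} ≤ N ω {y | (T ^ k) y = y} :=
      measure_mono (Set.singleton_subset_iff.mpr hfix)
    rw [hx1, hFix] at hle
    exact (by norm_num : ¬((1 : ℝ≥0∞) ≤ 0)) hle
  · have hxne : x ≠ (T ^ k) x := fun h => hfix h.symm
    have hd : 0 < dist x ((T ^ k) x) := dist_pos.mpr hxne
    obtain ⟨j, hj⟩ := exists_nat_one_div_lt hd
    obtain ⟨r, hr⟩ := exists_nat_ge (max (dist x x₀) (dist ((T ^ k) x) x₀))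
    refine hBad j r ⟨x, hj, ?_, ?_, le_of_eq hx1.symm, le_of_eq hx2.symm⟩
    · exact Metric.mem_closedBall.mpr (le_trans (le_max_left _ _) hr)
    · exact Metric.mem_closedBall.mpr (le_trans (le_max_right _ _) hr)

end SuShi
end

section
/- Assume (X,𝒜,μ,T) admits a measurable law of large numbers. Let λ be Lebesgue measure on ℝ₊ with Borel σ-algebra ℬ, and let 𝓛 ⊆ 𝒜⊗ℬ be a sub-σ-algebra which is a σ-finite factor of the product system (X×ℝ₊, 𝒜⊗ℬ, μ⊗λ, T×Id): (T×Id)⁻¹𝓛 = 𝓛 modulo μ⊗λ-null sets, and the restriction of μ⊗λ to 𝓛 is σ-finite. Then there exists a Borel set C ⊆ ℝ₊ with 0 < λ(C) < ∞ such that X×C belongs to 𝓛 (modulo μ⊗λ-null sets). -/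
open MeasureTheory ProbabilityTheory Filter
open scoped ENNReal NNReal

namespace SuShi

/-- if `(X,μ,T)` admits a measurable law of large numbers, then every σ-finite
factor `L` of the product system `(X × ℝ₊, μ ⊗ λ, T × Id)` contains a set `X × C` with
`0 < λ(C) < ∞` (modulo null sets). -/
theorem stmt12 {X : Type*} [MetricSpace X] [CompleteSpace X] [TopologicalSpace.SeparableSpace X]
    [MeasurableSpace X] [BorelSpace X]
    (μ : Measure X) [SigmaFinite μ]
    (hμbdd : ∀ s : Set X, Bornology.IsBounded s → μ s < ⊤)
    (hμinf : μ Set.univ = ⊤)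
    (T : Equiv.Perm X) (hT : Measurable ⇑T) (hTinv : Measurable ⇑T.symm)
    (hTpres : MeasurePreserving ⇑T μ μ)
    (hTcons : Conservative ⇑T μ) (hTerg : Ergodic ⇑T μ)
    (hLLN : MeasurableLLN μ ⇑T)
    (L : MeasurableSpace (X × ℝ)) (hle : L ≤ Prod.instMeasurableSpace)
    (hσfin : SigmaFinite ((μ.prod ((volume : Measure ℝ).restrict (Set.Ici 0))).trim hle))
    (hinv₁ : ∀ B : Set (X × ℝ), MeasurableSet[L] B → ∃ B' : Set (X × ℝ),
      MeasurableSet[L] B' ∧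
      (μ.prod ((volume : Measure ℝ).restrict (Set.Ici 0)))
        (symmDiff (Prod.map ⇑T id ⁻¹' B) B') = 0)
    (hinv₂ : ∀ B : Set (X × ℝ), MeasurableSet[L] B → ∃ B' : Set (X × ℝ),
      MeasurableSet[L] B' ∧
      (μ.prod ((volume : Measure ℝ).restrict (Set.Ici 0)))
        (symmDiff B (Prod.map ⇑T id ⁻¹' B')) = 0) :
    ∃ C : Set ℝ, MeasurableSet C ∧
      0 < (volume : Measure ℝ).restrict (Set.Ici 0) C ∧
      (volume : Measure ℝ).restrict (Set.Ici 0) C < ⊤ ∧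
      ∃ B : Set (X × ℝ), MeasurableSet[L] B ∧
        (μ.prod ((volume : Measure ℝ).restrict (Set.Ici 0)))
          (symmDiff B (Set.univ ×ˢ C)) = 0 := by
  classical
  letI : MeasurableSpace (X × ℝ) := Prod.instMeasurableSpace
  obtain ⟨L₀, hL₀m, hL₀⟩ := hLLN
  set lam : Measure ℝ := (volume : Measure ℝ).restrict (Set.Ici 0) with hlam
  set ν : @Measure (X × ℝ) Prod.instMeasurableSpace := μ.prod lam with hνdef
  have hlamtop : lam Set.univ = ⊤ := by
    rw [hlam, Measure.restrict_apply MeasurableSet.univ, Set.univ_inter]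
    exact Real.volume_Ici
  have hνuniv : ν Set.univ = ⊤ := by
    have h1 : (Set.univ : Set (X × ℝ)) = Set.univ ×ˢ Set.univ := Set.univ_prod_univ.symm
    rw [hνdef, h1, Measure.prod_prod, hμinf, hlamtop]
    simp
  -- find a set B in L with 0 < ν B < ∞
  obtain ⟨B, hBL, hB0, hBfin⟩ :
      ∃ B : Set (X × ℝ), MeasurableSet[L] B ∧ 0 < ν B ∧ ν B < ⊤ := by
    by_contra h
    push_neg at h
    have hall : ∀ n, ν (MeasureTheory.spanningSets (ν.trim hle) n) = 0 := by
      intro n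
      have hmeas := MeasureTheory.measurableSet_spanningSets (ν.trim hle) n
      have hfin : ν (MeasureTheory.spanningSets (ν.trim hle) n) < ⊤ := by
        rw [← trim_measurableSet_eq hle hmeas]
        exact MeasureTheory.measure_spanningSets_lt_top _ n
      by_contra h0
      exact absurd hfin (not_lt.2 (h _ hmeas (pos_iff_ne_zero.2 h0)))
    have := measure_iUnion_null hall
    rw [MeasureTheory.iUnion_spanningSets, hνuniv] at this
    exact ENNReal.top_ne_zero this
  have hBm : MeasurableSet[Prod.instMeasurableSpace] B := hle _ hBL
  set f : X × ℝ → X × ℝ := Prod.map ⇑T id with hfdef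
  have hfm : @Measurable _ _ Prod.instMeasurableSpace Prod.instMeasurableSpace f :=
    hT.prodMap measurable_id
  have hfp : @MeasurePreserving _ _ Prod.instMeasurableSpace Prod.instMeasurableSpace f ν ν :=
    hTpres.prod (MeasurePreserving.id lam)
  have hfq := hfp.quasiMeasurePreserving
  -- iterated approximations in L
  have key : ∀ k : ℕ, ∃ Bk : Set (X × ℝ),
      MeasurableSet[L] Bk ∧ ν (symmDiff (f^[k] ⁻¹' B) Bk) = 0 := by
    intro k
    induction k with
    | zero => exact ⟨B, hBL, by simp⟩
    | succ k ih =>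
      obtain ⟨Bk, hBkL, hBk⟩ := ih
      obtain ⟨B', hB'L, hB'⟩ := hinv₁ Bk hBkL
      refine ⟨B', hB'L, ?_⟩
      have hsub : symmDiff (f^[k+1] ⁻¹' B) B' ⊆
          (f ⁻¹' symmDiff (f^[k] ⁻¹' B) Bk) ∪ symmDiff (f ⁻¹' Bk) B' := by
        have h1 : f^[k+1] ⁻¹' B = f ⁻¹' (f^[k] ⁻¹' B) := by
          rw [Function.iterate_succ, Set.preimage_comp]
        have h2 : f ⁻¹' symmDiff (f^[k] ⁻¹' B) Bk
            = symmDiff (f ⁻¹' (f^[k] ⁻¹' B)) (f ⁻¹' Bk) := by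
          simp [Set.symmDiff_def, Set.preimage_union, Set.preimage_diff]
        rw [h1, h2]
        exact symmDiff_triangle _ _ _
      exact measure_mono_null hsub (measure_union_null (hfq.preimage_null hBk) hB')
  choose Bk hBkL hBknull using key
  -- sections of B and the key functions
  set sB : ℝ → Set X := fun r => (fun x => (x, r)) ⁻¹' B with hsBdef
  have hsBm : ∀ r, MeasurableSet (sB r) :=
    fun r => hBm.preimage (measurable_id.prodMk measurable_const)
  have hgm : Measurable fun r => μ (sB r) := measurable_measure_prodMk_right hBm
  set g : X × ℝ → ℝ≥0∞ := fun p => μ (sB p.2) with hgdef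
  have hgmm : Measurable[Prod.instMeasurableSpace] g := hgm.comp measurable_snd
  set F : X × ℝ → ℝ≥0∞ := fun p => L₀ (fun k => B.indicator 1 (f^[k] p)) with hFdef
  have hFm : Measurable[Prod.instMeasurableSpace] F := by
    refine hL₀m.comp ?_
    refine @measurable_pi_lambda (X × ℝ) ℕ (fun _ => ℝ≥0∞) Prod.instMeasurableSpace (fun _ => inferInstance)
      (fun p k => B.indicator 1 (f^[k] p)) (fun k => ?_)
    exact (measurable_one.indicator hBm).comp (hfm.iterate k)
  set G : X × ℝ → ℝ≥0∞ := fun p => L₀ (fun k => (Bk k).indicator 1 p) with hGdef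
  have hGm : Measurable[L] G := by
    refine hL₀m.comp ?_
    refine @measurable_pi_lambda (X × ℝ) ℕ (fun _ => ℝ≥0∞) L (fun _ => inferInstance)
      (fun p k => (Bk k).indicator 1 p) (fun k => ?_)
    exact Measurable.indicator (@measurable_one ℝ≥0∞ (X × ℝ) _ L _) (hBkL k)
  have hit : ∀ (k : ℕ) (x : X) (r : ℝ), f^[k] (x, r) = (T^[k] x, r) := by
    intro k
    induction k with
    | zero => intro x r; rfl
    | succ k ih =>
      intro x r
      rw [Function.iterate_succ_apply, Function.iterate_succ_apply]
      exact ih (T x) r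
  -- F agrees a.e. with g by the measurable law of large numbers and Fubini
  have hFg : ∀ᵐ p ∂ν, F p = g p := by
    rw [ae_iff]
    have hbadm : MeasurableSet[Prod.instMeasurableSpace] {p : X × ℝ | ¬ F p = g p} := by
      have h1 : {p : X × ℝ | F p = g p}
          = {p : X × ℝ | F p ≤ g p} ∩ {p : X × ℝ | g p ≤ F p} := by
        ext p
        simp only [Set.mem_setOf_eq, Set.mem_inter_iff]
        exact ⟨fun h => ⟨le_of_eq h, le_of_eq h.symm⟩, fun h => le_antisymm h.1 h.2⟩
      have h2 : MeasurableSet[Prod.instMeasurableSpace] {p : X × ℝ | F p = g p} := by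
        rw [h1]
        exact (measurableSet_le hFm hgmm).inter (measurableSet_le hgmm hFm)
      have := h2.compl
      rwa [Set.compl_setOf] at this
    rw [hνdef, Measure.prod_apply_symm hbadm]
    have hzero : ∀ r : ℝ, μ ((fun x => (x, r)) ⁻¹' {p : X × ℝ | ¬ F p = g p}) = 0 := by
      intro r
      have hsec := hL₀ (sB r) (hsBm r)
      rw [ae_iff] at hsec
      refine measure_mono_null ?_ hsec
      intro x hx
      simp only [Set.mem_preimage, Set.mem_setOf_eq] at hx ⊢
      intro hEq
      apply hx
      have hfun : (fun k => B.indicator (1 : X × ℝ → ℝ≥0∞) (f^[k] (x, r)))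
          = fun k => (sB r).indicator (1 : X → ℝ≥0∞) (T^[k] x) := by
        funext k
        rw [hit k x r]
        simp only [Set.indicator_apply, hsBdef, Set.mem_preimage, Pi.one_apply]
      show L₀ (fun k => B.indicator (1 : X × ℝ → ℝ≥0∞) (f^[k] (x, r))) = μ (sB r)
      rw [hfun]
      exact hEq
    rw [lintegral_congr hzero, lintegral_zero]
  -- F agrees a.e. with G
  have hFG : ∀ᵐ p ∂ν, F p = G p := by
    have hnull : ν (⋃ k, symmDiff (f^[k] ⁻¹' B) (Bk k)) = 0 := measure_iUnion_null hBknull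
    rw [ae_iff]
    refine measure_mono_null (fun p hp => ?_) hnull
    simp only [Set.mem_setOf_eq] at hp
    by_contra hpU
    apply hp
    have hk : ∀ k, B.indicator (1 : X × ℝ → ℝ≥0∞) (f^[k] p) = (Bk k).indicator 1 p := by
      intro k
      have hpk : p ∉ symmDiff (f^[k] ⁻¹' B) (Bk k) :=
        fun h => hpU (Set.mem_iUnion.2 ⟨k, h⟩)
      rw [Set.mem_symmDiff] at hpk
      have hiff : (f^[k] p ∈ B) ↔ p ∈ Bk k := by
        constructor
        · intro h1; by_contra h2; exact hpk (Or.inl ⟨h1, h2⟩)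
        · intro h1; by_contra h2; exact hpk (Or.inr ⟨h1, h2⟩)
      simp only [Set.indicator_apply]
      exact if_congr hiff rfl rfl
    show L₀ (fun k => B.indicator (1 : X × ℝ → ℝ≥0∞) (f^[k] p))
        = L₀ (fun k => (Bk k).indicator 1 p)
    congr 1
    funext k
    exact hk k
  have hGg : ∀ᵐ p ∂ν, G p = g p := by
    filter_upwards [hFg, hFG] with p h1 h2
    rw [← h2, h1]
  -- the integral of the section measures
  have hInt : ∫⁻ r, μ (sB r) ∂lam = ν B := by
    rw [hνdef, Measure.prod_apply_symm hBm]
  have hpos : 0 < ∫⁻ r, μ (sB r) ∂lam := hInt ▸ hB0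
  obtain ⟨n, hn⟩ : ∃ n : ℕ, 0 < lam {r | ((n : ℝ≥0∞))⁻¹ < μ (sB r)} := by
    by_contra h
    push_neg at h
    have hsupp : lam (Function.support fun r => μ (sB r)) = 0 := by
      refine measure_mono_null ?_
        (measure_iUnion_null fun n : ℕ => le_antisymm (h n) zero_le)
      intro r hr
      obtain ⟨m, hm⟩ := ENNReal.exists_inv_nat_lt hr
      exact Set.mem_iUnion.2 ⟨m, hm⟩
    rw [lintegral_pos_iff_support hgm] at hpos
    exact absurd hsupp (ne_of_gt hpos)
  set a : ℝ≥0∞ := ((n : ℝ≥0∞))⁻¹ with hadef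
  have ha0 : a ≠ 0 := ENNReal.inv_ne_zero.2 (ENNReal.natCast_ne_top n)
  set C : Set ℝ := {r | a < μ (sB r)} with hCdef
  have hCm : MeasurableSet C := measurableSet_lt measurable_const hgm
  have hCfin : lam C < ⊤ := by
    have hle1 : a * lam C ≤ ∫⁻ r, μ (sB r) ∂lam := by
      refine le_trans (mul_le_mul_right (measure_mono ?_) a)
        (mul_meas_ge_le_lintegral₀ hgm.aemeasurable a)
      intro r hr
      exact le_of_lt (show a < μ (sB r) from hr)
    have hne : a * lam C ≠ ⊤ := ne_top_of_le_ne_top (by rw [hInt]; exact hBfin.ne) hle1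
    exact ENNReal.lt_top_of_mul_ne_top_right hne ha0
  refine ⟨C, hCm, hn, hCfin, G ⁻¹' Set.Ioi a, hGm measurableSet_Ioi, ?_⟩
  have hsub : symmDiff (G ⁻¹' Set.Ioi a) (Set.univ ×ˢ C) ⊆ {p | ¬ G p = g p} := by
    intro p hp
    rw [Set.mem_symmDiff] at hp
    have hCmem : p ∈ Set.univ ×ˢ C ↔ a < g p := by
      simp [hCdef, Set.mem_prod, hgdef]
    rcases hp with ⟨h1, h2⟩ | ⟨h1, h2⟩
    · intro hEq
      rw [Set.mem_preimage, Set.mem_Ioi] at h1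
      exact h2 (hCmem.2 (hEq ▸ h1))
    · intro hEq
      rw [Set.mem_preimage, Set.mem_Ioi] at h2
      exact h2 (by rw [hEq]; exact hCmem.1 h1)
  exact measure_mono_null hsub (ae_iff.mp hGg)

end SuShi
end

section
/- Let N be a T-point process on an invertible probability-preserving system (Ω,ℱ,ℙ,S) with intensity μ and moments of order n, for some n ≥ 1. Let A ∈ 𝒜_f and let ((A_i^ℓ)_{1≤i≤p_ℓ})_{ℓ≥1} be a generating sequence of partitions of A: an increasing (refining) sequence of finite measurable partitions of A such that for all x ≠ y in A there exists ℓ with x and y in different atoms of (A_i^ℓ)_{1≤i≤p_ℓ}. Then ∑_{i=1}^{p_ℓ} E[(N(A_i^ℓ))^n] → μ(A) as ℓ → ∞ (equivalently, the n-order moment measure of N assigns mass μ(A) to the diagonal part Δ_n ∩ (A×⋯×A)). -/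
open MeasureTheory ProbabilityTheory Filter
open scoped ENNReal NNReal

namespace SuShi

lemma sum_pow_le_pow_sum {ι : Type*} (s : Finset ι) (a : ι → ℝ≥0∞) {n : ℕ} (hn : 1 ≤ n) :
    ∑ i ∈ s, a i ^ n ≤ (∑ i ∈ s, a i) ^ n := by
  obtain ⟨m, rfl⟩ := Nat.exists_eq_add_of_le hn
  calc ∑ i ∈ s, a i ^ (1 + m)
      ≤ ∑ i ∈ s, a i * (∑ j ∈ s, a j) ^ m := by
        refine Finset.sum_le_sum fun i hi => ?_
        rw [pow_add, pow_one]
        exact mul_le_mul_right (pow_le_pow_left₀ zero_le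
          (Finset.single_le_sum (fun j _ => zero_le) hi) m) _
    _ = (∑ i ∈ s, a i) * (∑ j ∈ s, a j) ^ m := by rw [← Finset.sum_mul]
    _ = (∑ i ∈ s, a i) ^ (1 + m) := by rw [pow_add, pow_one]

/-- for a `T`-point process of intensity `μ` with moments of order `n`, the
diagonal part of the `n`-order moment measure on `A × ⋯ × A` has mass `μ(A)`: along a
generating sequence of partitions of `A`, `∑ᵢ E[N(Aᵢ^ℓ)^n] → μ(A)`. -/
theorem stmt19 {X : Type*} [MetricSpace X] [CompleteSpace X] [TopologicalSpace.SeparableSpace X]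
    [MeasurableSpace X] [BorelSpace X]
    (μ : Measure X) (hμbdd : ∀ s : Set X, Bornology.IsBounded s → μ s < ⊤)
    (hμinf : μ Set.univ = ⊤)
    (T : Equiv.Perm X) (hT : Measurable ⇑T) (hTinv : Measurable ⇑T.symm)
    (hTpres : MeasurePreserving ⇑T μ μ)
    (hTcons : Conservative ⇑T μ) (hTerg : Ergodic ⇑T μ)
    {Ω : Type*} [MeasurableSpace Ω] (P : Measure Ω) [IsProbabilityMeasure P]
    (S : Equiv.Perm Ω) (hS : Measurable ⇑S) (hSinv : Measurable ⇑S.symm)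
    (hSP : MeasurePreserving ⇑S P P)
    (N : Ω → Measure X) (hN : IsTPointProcess μ T P ⇑S N)
    (hint : HasIntensity P N μ)
    (n : ℕ) (hn : 1 ≤ n) (hmom : HasMomentsOfOrder P N μ n)
    (A : Set X) (hA : MeasurableSet A) (hA0 : 0 < μ A) (hAfin : μ A < ⊤)
    (p : ℕ → ℕ) (Ap : (ℓ : ℕ) → Fin (p ℓ) → Set X)
    (hmeas : ∀ ℓ i, MeasurableSet (Ap ℓ i))
    (hdisj : ∀ ℓ, Pairwise fun i i' => Disjoint (Ap ℓ i) (Ap ℓ i'))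
    (hcover : ∀ ℓ, ⋃ i, Ap ℓ i = A)
    (hrefine : ∀ ℓ, ∀ i : Fin (p (ℓ + 1)), ∃ i' : Fin (p ℓ), Ap (ℓ + 1) i ⊆ Ap ℓ i')
    (hsep : ∀ x ∈ A, ∀ y ∈ A, x ≠ y → ∃ ℓ, ∀ i, ¬(x ∈ Ap ℓ i ∧ y ∈ Ap ℓ i)) :
    Tendsto (fun ℓ => ∑ i : Fin (p ℓ), ∫⁻ ω, (N ω (Ap ℓ i)) ^ n ∂P)
      atTop (nhds (μ A)) := by
  classical
  have hn0 : n ≠ 0 := by omega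
  have hGmeas : ∀ ℓ (i : Fin (p ℓ)), Measurable fun ω => N ω (Ap ℓ i) :=
    fun ℓ i => (Measure.measurable_coe (hmeas ℓ i)).comp hN.measurable
  have hAmeas : Measurable fun ω => N ω A := (Measure.measurable_coe hA).comp hN.measurable
  have hsub : ∀ ℓ (i : Fin (p ℓ)), Ap ℓ i ⊆ A := by
    intro ℓ i x hx
    rw [← hcover ℓ]
    exact Set.mem_iUnion.2 ⟨i, hx⟩
  have hsum : ∀ ℓ (ω : Ω), ∑ i : Fin (p ℓ), N ω (Ap ℓ i) = N ω A := by
    intro ℓ ω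
    rw [← tsum_fintype (L := SummationFilter.unconditional _), ← measure_iUnion (hdisj ℓ) (hmeas ℓ), hcover ℓ]
  have hsepmono : ∀ (x y : X) (ℓ ℓ' : ℕ), ℓ ≤ ℓ' →
      (∀ i, ¬(x ∈ Ap ℓ i ∧ y ∈ Ap ℓ i)) → ∀ i, ¬(x ∈ Ap ℓ' i ∧ y ∈ Ap ℓ' i) := by
    intro x y ℓ ℓ' hle h
    induction ℓ', hle using Nat.le_induction with
    | base => exact h
    | succ m hm ih =>
      rintro i ⟨hx, hy⟩
      obtain ⟨i', hsub'⟩ := hrefine m i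
      exact ih i' ⟨hsub' hx, hsub' hy⟩
  have hmomA := hmom A hA hA0 hAfin
  have key : Tendsto (fun ℓ => ∫⁻ ω, ∑ i : Fin (p ℓ), (N ω (Ap ℓ i)) ^ n ∂P) atTop
      (nhds (∫⁻ ω, N ω A ∂P)) := by
    apply tendsto_lintegral_of_dominated_convergence (fun ω => (N ω A) ^ n)
    · intro ℓ; exact Finset.measurable_sum _ fun i _ => (hGmeas ℓ i).pow_const n
    · intro ℓ
      filter_upwards with ω
      calc ∑ i : Fin (p ℓ), (N ω (Ap ℓ i)) ^ n
          ≤ (∑ i : Fin (p ℓ), N ω (Ap ℓ i)) ^ n := sum_pow_le_pow_sum _ _ hn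
        _ = (N ω A) ^ n := by rw [hsum]
    · exact hmomA.ne
    · have h2 : ∀ᵐ ω ∂P, (N ω A) ^ n < ⊤ :=
        ae_lt_top (hAmeas.pow_const n) hmomA.ne
      filter_upwards [hN.simple, h2] with ω hωs hωf
      obtain ⟨D, hDc, hDb, hND⟩ := hωs
      have hNap : ∀ ℓ (i : Fin (p ℓ)), N ω (Ap ℓ i) = Measure.count (Ap ℓ i ∩ D) := by
        intro ℓ i
        rw [hND, Measure.restrict_apply (hmeas ℓ i)]
      have hNAfin : N ω A ≠ ⊤ := by
        intro h
        rw [h, ENNReal.top_pow (by omega : n ≠ 0)] at hωf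
        exact absurd hωf (lt_irrefl _)
      have hfin : (A ∩ D).Finite := by
        by_contra h
        apply hNAfin
        rw [hND, Measure.restrict_apply hA, Measure.count_apply_infinite h]
      set ℓfun : X × X → ℕ := fun q =>
        if h : ∃ ℓ, ∀ i, ¬(q.1 ∈ Ap ℓ i ∧ q.2 ∈ Ap ℓ i) then h.choose else 0 with hℓfun
      set L : ℕ := (hfin.toFinset ×ˢ hfin.toFinset).sup ℓfun with hL
      have hsepL : ∀ ℓ, L ≤ ℓ → ∀ x ∈ A ∩ D, ∀ y ∈ A ∩ D, x ≠ y →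
          ∀ i, ¬(x ∈ Ap ℓ i ∧ y ∈ Ap ℓ i) := by
        intro ℓ hLℓ x hx y hy hxy
        have hex : ∃ ℓ0, ∀ i, ¬(x ∈ Ap ℓ0 i ∧ y ∈ Ap ℓ0 i) := hsep x hx.1 y hy.1 hxy
        have hch : ∀ i, ¬(x ∈ Ap (ℓfun (x, y)) i ∧ y ∈ Ap (ℓfun (x, y)) i) := by
          have heq : ℓfun (x, y) = hex.choose := dif_pos hex
          rw [heq]; exact hex.choose_spec
        have hmem : (x, y) ∈ hfin.toFinset ×ˢ hfin.toFinset := by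
          rw [Finset.mem_product, hfin.mem_toFinset, hfin.mem_toFinset]
          exact ⟨hx, hy⟩
        have hle : ℓfun (x, y) ≤ ℓ := le_trans (Finset.le_sup hmem) hLℓ
        exact hsepmono x y _ ℓ hle hch
      apply tendsto_atTop_of_eventually_const (i₀ := L)
      intro ℓ hLℓ
      have hval : ∀ i : Fin (p ℓ), (N ω (Ap ℓ i)) ^ n = N ω (Ap ℓ i) := by
        intro i
        have hss : (Ap ℓ i ∩ D).Subsingleton := by
          intro x hx y hy
          by_contra hxy
          exact hsepL ℓ hLℓ x ⟨hsub ℓ i hx.1, hx.2⟩ y ⟨hsub ℓ i hy.1, hy.2⟩ hxy i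
            ⟨hx.1, hy.1⟩
        rcases hss.eq_empty_or_singleton with h | ⟨x, h⟩
        · rw [hNap ℓ i, h, measure_empty, zero_pow hn0]
        · rw [hNap ℓ i, h, Measure.count_singleton, one_pow]
      calc ∑ i : Fin (p ℓ), (N ω (Ap ℓ i)) ^ n
          = ∑ i : Fin (p ℓ), N ω (Ap ℓ i) := Finset.sum_congr rfl fun i _ => hval i
        _ = N ω A := hsum ℓ ω
  have hrw : ∀ ℓ, ∫⁻ ω, ∑ i : Fin (p ℓ), (N ω (Ap ℓ i)) ^ n ∂P
      = ∑ i : Fin (p ℓ), ∫⁻ ω, (N ω (Ap ℓ i)) ^ n ∂P := by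
    intro ℓ
    exact lintegral_finset_sum _ fun i _ => (hGmeas ℓ i).pow_const n
  rw [hint A hA] at key
  simp_rw [hrw] at key
  exact key

end SuShi
end
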